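/- arXiv:2404.11920 — 5 statements merged into one kernel-verified Lean document; each statement's English description precedes it below -/
import Mathlib

section
/- For every real n×m matrix A there exist matrices U in the orthogonal group O(n) (i.e. UᵀU = I) and V in the orthogonal group O(m), and a real n×m matrix Σ with A = U * Σ * Vᵀ, such that Σ i j = 0 whenever the indices i and j are distinct (as natural numbers), every 'diagonal' entry of Σ is nonnegative, and the diagonal entries are weakly decreasing: if (i : ℕ) ≤ (j : ℕ) and both index diagonal entries, then Σ j j ≤ Σ i i. -/
open Matrix

/-- Classical SVD of a real `n × m` matrix: `A = U * Σ * Vᵀ` with `U ∈ O(n)`, `V ∈ O(m)`,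
`Σ` rectangular-diagonal with nonnegative, weakly decreasing diagonal entries. -/
theorem real_svd (n m : ℕ) (A : Matrix (Fin n) (Fin m) ℝ) :
    ∃ (U : Matrix (Fin n) (Fin n) ℝ) (V : Matrix (Fin m) (Fin m) ℝ)
      (D : Matrix (Fin n) (Fin m) ℝ),
      Uᵀ * U = 1 ∧ Vᵀ * V = 1 ∧ A = U * D * Vᵀ ∧
      (∀ (i : Fin n) (j : Fin m), (i : ℕ) ≠ (j : ℕ) → D i j = 0) ∧
      (∀ (i : Fin n) (j : Fin m), (i : ℕ) = (j : ℕ) → 0 ≤ D i j) ∧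
      (∀ (i : Fin n) (i' : Fin m) (j : Fin n) (j' : Fin m),
        (i : ℕ) = (i' : ℕ) → (j : ℕ) = (j' : ℕ) → (i : ℕ) ≤ (j : ℕ) →
        D j j' ≤ D i i') := by
  classical
  have hB : (Aᵀ * A).IsHermitian := by
    have := isHermitian_conjTranspose_mul_self A
    rwa [conjTranspose_eq_transpose_of_trivial] at this
  set σ : Equiv.Perm (Fin m) := Tuple.sort (fun j => -hB.eigenvalues j) with hσ
  set μ : Fin m → ℝ := fun j => hB.eigenvalues (σ j) with hμ
  have hanti : ∀ i j : Fin m, i ≤ j → μ j ≤ μ i := by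
    intro i j hij
    have := Tuple.monotone_sort (fun j => -hB.eigenvalues j) hij
    simp only [Function.comp_apply] at this
    simpa [hμ] using this
  have hμ0 : ∀ j, 0 ≤ μ j := by
    intro j
    have hps : (Aᵀ * A).PosSemidef := by
      have := posSemidef_conjTranspose_mul_self A
      rwa [conjTranspose_eq_transpose_of_trivial] at this
    exact hps.eigenvalues_nonneg (σ j)
  set V0 : Matrix (Fin m) (Fin m) ℝ := (hB.eigenvectorUnitary : Matrix (Fin m) (Fin m) ℝ)
    with hV0
  have hstar : star V0 * V0 = 1 := Unitary.coe_star_mul_self hB.eigenvectorUnitary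
  rw [Matrix.star_eq_conjTranspose, conjTranspose_eq_transpose_of_trivial] at hstar
  set V : Matrix (Fin m) (Fin m) ℝ := V0.submatrix id ⇑σ with hV
  have hVo : Vᵀ * V = 1 := by
    rw [hV, transpose_submatrix,
      ← Matrix.submatrix_mul V0ᵀ V0 ⇑σ id ⇑σ Function.bijective_id, hstar,
      Matrix.submatrix_one_equiv]
  have hd0 : V0ᵀ * (Aᵀ * A) * V0 = Matrix.diagonal (hB.eigenvalues) := by
    have := hB.conjStarAlgAut_star_eigenvectorUnitary
    rw [Unitary.conjStarAlgAut_apply, Unitary.coe_star, star_star, Matrix.star_eq_conjTranspose, conjTranspose_eq_transpose_of_trivial] at this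
    rwa [RCLike.ofReal_real_eq_id, Function.id_comp] at this
  have hdiag : Vᵀ * (Aᵀ * A) * V = Matrix.diagonal μ := by
    rw [hV, transpose_submatrix]
    rw [← Matrix.submatrix_id_id (Aᵀ * A),
      ← Matrix.submatrix_mul V0ᵀ (Aᵀ * A) ⇑σ id id Function.bijective_id,
      ← Matrix.submatrix_mul (V0ᵀ * (Aᵀ * A)) V0 ⇑σ id ⇑σ Function.bijective_id, hd0,
      Matrix.submatrix_diagonal _ _ σ.injective]
    rfl
  set W : Matrix (Fin n) (Fin m) ℝ := A * V with hW
  have hWW : Wᵀ * W = Matrix.diagonal μ := by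
    rw [hW, transpose_mul, ← hdiag]
    simp only [Matrix.mul_assoc]
  have hsum : ∀ i j : Fin m, (∑ r, W r i * W r j) = Matrix.diagonal μ i j := by
    intro i j
    have := congrFun (congrFun hWW i) j
    simpa [Matrix.mul_apply, Matrix.transpose_apply] using this
  have hcol0 : ∀ j : Fin m, μ j = 0 → ∀ r, W r j = 0 := by
    intro j hj r
    have h0 : (∑ r, W r j * W r j) = 0 := by
      rw [hsum j j, Matrix.diagonal_apply_eq, hj]
    have := (Finset.sum_eq_zero_iff_of_nonneg (fun r _ => mul_self_nonneg (W r j))).mp h0 r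
      (Finset.mem_univ r)
    exact mul_self_eq_zero.mp this
  set g : Fin m → EuclideanSpace ℝ (Fin n) :=
    fun j => (Real.sqrt (μ j))⁻¹ • ((WithLp.equiv 2 (Fin n → ℝ)).symm (fun r => W r j)) with hg
  have hgapp : ∀ (j : Fin m) (r : Fin n), g j r = (Real.sqrt (μ j))⁻¹ * W r j := by
    intro j r; rfl
  have core : ∀ i j : Fin m, 0 < μ i → 0 < μ j →
      (inner ℝ (g i) (g j) : ℝ) = if i = j then 1 else 0 := by
    intro i j hi hj
    rw [PiLp.inner_apply]
    simp only [hgapp, RCLike.inner_apply, starRingEnd_apply, star_trivial]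
    rw [Finset.sum_congr rfl (fun r _ => mul_comm ((Real.sqrt (μ j))⁻¹ * W r j) _)]
    have : ∀ r, (Real.sqrt (μ i))⁻¹ * W r i * ((Real.sqrt (μ j))⁻¹ * W r j)
        = (Real.sqrt (μ i))⁻¹ * (Real.sqrt (μ j))⁻¹ * (W r i * W r j) := by
      intro r; ring
    rw [Finset.sum_congr rfl (fun r _ => this r), ← Finset.mul_sum, hsum i j]
    by_cases hij : i = j
    · subst hij
      rw [Matrix.diagonal_apply_eq, if_pos rfl, ← mul_inv,
        Real.mul_self_sqrt (le_of_lt hi), inv_mul_cancel₀ (ne_of_gt hi)]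
    · rw [Matrix.diagonal_apply_ne _ hij, if_neg hij, mul_zero]
  have hsmall : ∀ j : Fin m, 0 < μ j → (j : ℕ) < n := by
    intro j hj
    set P : Finset (Fin m) := Finset.univ.filter (fun k => 0 < μ k) with hP
    have horthP : Orthonormal ℝ (fun p : P => g p) := by
      rw [orthonormal_iff_ite]
      intro p q
      have hp : 0 < μ p := (Finset.mem_filter.mp p.2).2
      have hq : 0 < μ q := (Finset.mem_filter.mp q.2).2
      rw [core p q hp hq]
      simp only [Subtype.ext_iff]
    have hcard := horthP.linearIndependent.fintype_card_le_finrank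
    rw [finrank_euclideanSpace_fin, Fintype.card_coe] at hcard
    have hsub : Finset.Iic j ⊆ P := by
      intro k hk
      rw [Finset.mem_Iic] at hk
      exact Finset.mem_filter.mpr ⟨Finset.mem_univ k, lt_of_lt_of_le hj (hanti k j hk)⟩
    have := Finset.card_le_card hsub
    rw [Fin.card_Iic] at this
    omega
  set s : Set (Fin n) := {i | ∃ h : (i : ℕ) < m, 0 < μ ⟨(i : ℕ), h⟩} with hs
  set v : Fin n → EuclideanSpace ℝ (Fin n) :=
    fun i => if h : (i : ℕ) < m then g ⟨(i : ℕ), h⟩ else 0 with hv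
  have horth : Orthonormal ℝ (s.restrict v) := by
    rw [orthonormal_iff_ite]
    rintro ⟨i, hi1, hi2⟩ ⟨j, hj1, hj2⟩
    simp only [Set.restrict_apply, hv, dif_pos hi1, dif_pos hj1]
    show inner ℝ (dite ((i : ℕ) < m) (fun h => g ⟨(i : ℕ), h⟩) (fun _ => 0))
      (dite ((j : ℕ) < m) (fun h => g ⟨(j : ℕ), h⟩) (fun _ => 0)) = _
    rw [dif_pos hi1, dif_pos hj1]
    rw [core _ _ hi2 hj2]
    congr 1
    simp [Fin.ext_iff, Subtype.ext_iff]
  obtain ⟨b, hb⟩ := horth.exists_orthonormalBasis_extension_of_card_eq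
    (by simp [finrank_euclideanSpace_fin])
  set U : Matrix (Fin n) (Fin n) ℝ := Matrix.of (fun r c => b c r) with hU
  have hUo : Uᵀ * U = 1 := by
    ext c c'
    rw [Matrix.mul_apply, Matrix.one_apply]
    have := (orthonormal_iff_ite.mp b.orthonormal) c c'
    rw [PiLp.inner_apply] at this
    simpa [hU, RCLike.inner_apply, starRingEnd_apply, star_trivial, mul_comm] using this
  set D : Matrix (Fin n) (Fin m) ℝ :=
    Matrix.of (fun i j => if (i : ℕ) = (j : ℕ) then Real.sqrt (μ j) else 0) with hD
  have hWUD : W = U * D := by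
    ext r j
    rw [Matrix.mul_apply]
    by_cases hn : (j : ℕ) < n
    · have hsum1 : (∑ k, U r k * D k j) = U r ⟨(j : ℕ), hn⟩ * Real.sqrt (μ j) := by
        rw [Finset.sum_eq_single ⟨(j : ℕ), hn⟩]
        · simp [hD]
        · intro k _ hk
          have : (k : ℕ) ≠ (j : ℕ) := by
            intro h; exact hk (Fin.ext h)
          simp [hD, this]
        · intro h; exact absurd (Finset.mem_univ _) h
      rw [hsum1]
      rcases eq_or_lt_of_le (hμ0 j) with hz | hp
      · rw [hcol0 j hz.symm r, ← hz, Real.sqrt_zero, mul_zero]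
      · have hmem : (⟨(j : ℕ), hn⟩ : Fin n) ∈ s := ⟨j.2, by simpa using hp⟩
        have hbv := hb _ hmem
        have : U r ⟨(j : ℕ), hn⟩ = (Real.sqrt (μ j))⁻¹ * W r j := by
          rw [hU]
          show b ⟨(j : ℕ), hn⟩ r = _
          rw [hbv, hv]
          simp only [dif_pos j.2]
          have : (⟨((⟨(j : ℕ), hn⟩ : Fin n) : ℕ), j.2⟩ : Fin m) = j := Fin.ext rfl
          rw [this, hgapp]
        rw [this, mul_comm ((Real.sqrt (μ j))⁻¹) (W r j), mul_assoc,
          inv_mul_cancel₀ (Real.sqrt_ne_zero'.mpr hp), mul_one]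
    · have hz : μ j = 0 := by
        rcases eq_or_lt_of_le (hμ0 j) with hz | hp
        · exact hz.symm
        · exact absurd (hsmall j hp) hn
      rw [hcol0 j hz r]
      symm
      apply Finset.sum_eq_zero
      intro k _
      have : (k : ℕ) ≠ (j : ℕ) := by omega
      simp [hD, this]
  refine ⟨U, V, D, hUo, hVo, ?_, ?_, ?_, ?_⟩
  · have hVVt : V * Vᵀ = 1 := mul_eq_one_comm.mp hVo
    calc A = A * (V * Vᵀ) := by rw [hVVt, Matrix.mul_one]
    _ = (A * V) * Vᵀ := by rw [Matrix.mul_assoc]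
    _ = U * D * Vᵀ := by rw [← hW, hWUD]
  · intro i j hij
    simp [hD, hij]
  · intro i j hij
    simp only [hD, Matrix.of_apply, if_pos hij]
    exact Real.sqrt_nonneg _
  · intro i i' j j' hii hjj hij
    simp only [hD, Matrix.of_apply, if_pos hii, if_pos hjj]
    exact Real.sqrt_le_sqrt (hanti i' j' (by omega))
end

section
/- For every complex n×m matrix A there exist matrices U in the unitary group U(n) (i.e. UᴴU = I) and V in the unitary group U(m), and a complex n×m matrix Σ with A = U * Σ * Vᴴ, such that Σ i j = 0 whenever the indices i and j are distinct (as natural numbers), every diagonal entry of Σ is a nonnegative real number (it equals the coercion of a nonnegative real), and the diagonal entries are weakly decreasing: if (i : ℕ) ≤ (j : ℕ) and both index diagonal entries, then Re(Σ j j) ≤ Re(Σ i i). -/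
open Matrix

local notation "⟪" x ", " y "⟫" => @inner ℂ _ _ x y

/-- Inner product on Euclidean space equals star-dot-product. -/
private lemma inner_eq_dot {k : ℕ} (x y : EuclideanSpace ℂ (Fin k)) :
    ⟪x, y⟫ = dotProduct (star (x : Fin k → ℂ)) (y : Fin k → ℂ) := by
  rw [EuclideanSpace.inner_eq_star_dotProduct, dotProduct_comm]

/-- Classical SVD of a complex `n × m` matrix: `A = U * Σ * Vᴴ` with `U ∈ U(n)`, `V ∈ U(m)`,
`Σ` rectangular-diagonal with nonnegative real, weakly decreasing diagonal entries. -/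
theorem complex_svd (n m : ℕ) (A : Matrix (Fin n) (Fin m) ℂ) :
    ∃ (U : Matrix (Fin n) (Fin n) ℂ) (V : Matrix (Fin m) (Fin m) ℂ)
      (D : Matrix (Fin n) (Fin m) ℂ),
      Uᴴ * U = 1 ∧ Vᴴ * V = 1 ∧ A = U * D * Vᴴ ∧
      (∀ (i : Fin n) (j : Fin m), (i : ℕ) ≠ (j : ℕ) → D i j = 0) ∧
      (∀ (i : Fin n) (j : Fin m), (i : ℕ) = (j : ℕ) →
        ∃ r : ℝ, 0 ≤ r ∧ D i j = (r : ℂ)) ∧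
      (∀ (i : Fin n) (i' : Fin m) (j : Fin n) (j' : Fin m),
        (i : ℕ) = (i' : ℕ) → (j : ℕ) = (j' : ℕ) → (i : ℕ) ≤ (j : ℕ) →
        (D j j').re ≤ (D i i').re) := by
  classical
  have hB : (Aᴴ * A).IsHermitian := isHermitian_conjTranspose_mul_self A
  set μ : Fin m → ℝ := hB.eigenvalues with hμdef
  have hμ0 : ∀ j, 0 ≤ μ j := fun j => eigenvalues_conjTranspose_mul_self_nonneg A j
  set e : Equiv.Perm (Fin m) := Tuple.sort (fun j => -μ j) with hedef
  have hmono : Monotone ((fun j => -μ j) ∘ e) := Tuple.monotone_sort _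
  set σ : Fin m → ℝ := fun j => Real.sqrt (μ (e j)) with hσdef
  have hσ0 : ∀ j, 0 ≤ σ j := fun j => Real.sqrt_nonneg _
  have hσanti : ∀ j k : Fin m, j ≤ k → σ k ≤ σ j := by
    intro j k h
    apply Real.sqrt_le_sqrt
    have := hmono h
    simpa using this
  have hσsq : ∀ j, (σ j : ℝ) * σ j = μ (e j) := fun j => Real.mul_self_sqrt (hμ0 _)
  set v : Fin m → EuclideanSpace ℂ (Fin m) := fun j => hB.eigenvectorBasis (e j) with hvdef
  have hvon : Orthonormal ℂ v := hB.eigenvectorBasis.orthonormal.comp e e.injective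
  have hvdot : ∀ j k, dotProduct (star (v j : Fin m → ℂ)) (v k) =
      if j = k then 1 else 0 := by
    intro j k
    rw [← inner_eq_dot]
    exact orthonormal_iff_ite.mp hvon j k
  have hveig : ∀ j, (Aᴴ * A) *ᵥ (v j : Fin m → ℂ) = (μ (e j) : ℝ) • (v j : Fin m → ℂ) :=
    fun j => hB.mulVec_eigenvectorBasis (e j)
  -- key inner product computation
  have key : ∀ j k, dotProduct (star (A *ᵥ (v j : Fin m → ℂ))) (A *ᵥ (v k : Fin m → ℂ))
      = if j = k then ((μ (e k) : ℝ) : ℂ) else 0 := by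
    intro j k
    rw [star_mulVec, dotProduct_mulVec, vecMul_vecMul, ← dotProduct_mulVec, hveig]
    rw [dotProduct_smul]
    rw [hvdot j k]
    by_cases h : j = k <;> simp [h, Complex.real_smul]
  -- zero singular value ⇒ zero column
  have hAv0 : ∀ j, σ j = 0 → A *ᵥ (v j : Fin m → ℂ) = 0 := by
    intro j hj
    have hμj : μ (e j) = 0 := by
      have := hσsq j; rw [hj] at this; simpa using this.symm
    have h0 : @inner ℂ (EuclideanSpace ℂ (Fin n)) _
        ((WithLp.equiv 2 _).symm (A *ᵥ (v j : Fin m → ℂ)))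
        ((WithLp.equiv 2 _).symm (A *ᵥ (v j : Fin m → ℂ))) = 0 := by
      rw [inner_eq_dot]
      simpa [hμj] using key j j
    have := inner_self_eq_zero.mp h0
    simpa using congrArg (WithLp.equiv 2 (Fin n → ℂ)) this
  -- normalized columns
  set u : Fin m → EuclideanSpace ℂ (Fin n) :=
    fun j => ((σ j : ℂ))⁻¹ • (WithLp.toLp 2 (A *ᵥ (v j : Fin m → ℂ)) : EuclideanSpace ℂ (Fin n)) with hudef
  have hu_inner : ∀ j k, 0 < σ j → 0 < σ k →
      ⟪u j, u k⟫ = if j = k then 1 else 0 := by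
    intro j k hj hk
    rw [hudef]
    simp only [inner_smul_left, inner_smul_right, starRingEnd_apply, star_inv₀]
    rw [inner_eq_dot, WithLp.ofLp_toLp, WithLp.ofLp_toLp]
    rw [key j k]
    by_cases h : j = k
    · subst h
      simp only [if_pos rfl, if_true]
      rw [← hσsq j]
      have : (starRingEnd ℂ) ((σ j : ℂ)) = (σ j : ℂ) := Complex.conj_ofReal _
      simp only [RCLike.star_def, Complex.conj_ofReal]
      have hne : (σ j : ℂ) ≠ 0 := by
        simpa using ne_of_gt hj
      field_simp
      norm_cast
    · simp [h]
  -- positive singular values: index bound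
  have hlt : ∀ j : Fin m, 0 < σ j → (j : ℕ) < n := by
    intro j hj
    by_contra hn
    push_neg at hn
    -- build an orthonormal family of size n+1 in ℂ^n
    have hkm : ∀ k : Fin (n + 1), (k : ℕ) < m := fun k =>
      lt_of_le_of_lt (Nat.lt_succ_iff.mp (k.isLt) |>.trans hn) j.isLt
    set f : Fin (n + 1) → EuclideanSpace ℂ (Fin n) := fun k => u ⟨k, hkm k⟩ with hfdef
    have hfpos : ∀ k : Fin (n + 1), 0 < σ ⟨k, hkm k⟩ := by
      intro k
      have hle : (⟨k, hkm k⟩ : Fin m) ≤ j := by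
        simp [Fin.le_def]
        exact (Nat.lt_succ_iff.mp k.isLt).trans hn
      exact lt_of_lt_of_le hj (hσanti _ _ hle)
    have hfon : Orthonormal ℂ f := by
      rw [orthonormal_iff_ite]
      intro k l
      rw [hfdef]
      simp only
      rw [hu_inner _ _ (hfpos k) (hfpos l)]
      by_cases h : k = l
      · simp [h]
      · have : (⟨(k : ℕ), hkm k⟩ : Fin m) ≠ ⟨(l : ℕ), hkm l⟩ := by
          simp [Fin.ext_iff]
          exact fun hh => h (Fin.ext hh)
        simp [this, h]
    have hcard := hfon.linearIndependent.fintype_card_le_finrank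
    rw [finrank_euclideanSpace_fin, Fintype.card_fin] at hcard
    omega
  -- extend to an orthonormal basis
  set s : Set (Fin n) := {i | ∃ h : (i : ℕ) < m, 0 < σ ⟨i, h⟩} with hsdef
  set w : Fin n → EuclideanSpace ℂ (Fin n) :=
    fun i => if h : (i : ℕ) < m then u ⟨i, h⟩ else 0 with hwdef
  have hw : Orthonormal ℂ (s.restrict w) := by
    rw [orthonormal_iff_ite]
    rintro ⟨i, him, hipos⟩ ⟨k, hkm, hkpos⟩
    simp only [Set.restrict, Set.domRestrict_apply, hwdef, dif_pos him, dif_pos hkm]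
    rw [hu_inner _ _ hipos hkpos]
    by_cases h : i = k
    · subst h; simp
    · have h1 : (⟨(i : ℕ), him⟩ : Fin m) ≠ ⟨(k : ℕ), hkm⟩ := by
        simp [Fin.ext_iff]
        exact fun hh => h (Fin.ext hh)
      have h2 : (⟨i, ⟨him, hipos⟩⟩ : s) ≠ ⟨k, ⟨hkm, hkpos⟩⟩ := by
        simp [Subtype.ext_iff]
        exact h
      simp [h1, h2]
  obtain ⟨b, hb⟩ := hw.exists_orthonormalBasis_extension_of_card_eq
    (by rw [finrank_euclideanSpace_fin, Fintype.card_fin])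
  -- the three matrices
  refine ⟨Matrix.of (fun i k => b k i), Matrix.of (fun (i : Fin m) (j : Fin m) => v j i),
    Matrix.of (fun (i : Fin n) (j : Fin m) => if (i : ℕ) = (j : ℕ) then (σ j : ℂ) else 0),
    ?_, ?_, ?_, ?_, ?_, ?_⟩
  · -- Uᴴ U = 1
    ext j k
    simp only [Matrix.mul_apply, conjTranspose_apply, Matrix.of_apply, Matrix.one_apply]
    have := orthonormal_iff_ite.mp b.orthonormal j k
    rw [inner_eq_dot] at this
    simpa [dotProduct] using this
  · -- Vᴴ V = 1
    ext j k
    simp only [Matrix.mul_apply, conjTranspose_apply, Matrix.of_apply, Matrix.one_apply]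
    have := hvdot j k
    simpa [dotProduct] using this
  · -- A = U D Vᴴ
    have hVV : Matrix.of (fun (i : Fin m) (j : Fin m) => v j i) * (Matrix.of (fun (i : Fin m) (j : Fin m) => v j i))ᴴ = 1 := by
      rw [mul_eq_one_comm]
      ext j k
      simp only [Matrix.mul_apply, conjTranspose_apply, Matrix.of_apply, Matrix.one_apply]
      have := hvdot j k
      simpa [dotProduct] using this
    have hAV : A * Matrix.of (fun (i : Fin m) (j : Fin m) => v j i) =
        Matrix.of (fun i k => b k i) *
          Matrix.of (fun (i : Fin n) (j : Fin m) => if (i : ℕ) = (j : ℕ) then (σ j : ℂ) else 0) := by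
      ext i j
      simp only [Matrix.mul_apply, Matrix.of_apply]
      have hLHS : ∑ k, A i k * v j k = (A *ᵥ (v j : Fin m → ℂ)) i := rfl
      rw [hLHS]
      by_cases hσj : σ j = 0
      · rw [hAv0 j hσj]
        simp only [Pi.zero_apply]
        symm
        apply Finset.sum_eq_zero
        intro k _
        by_cases h : (k : ℕ) = (j : ℕ)
        · simp [h, hσj]
        · simp [h]
      · have hpos : 0 < σ j := lt_of_le_of_ne (hσ0 j) (Ne.symm hσj)
        have hjn : (j : ℕ) < n := hlt j hpos
        set k0 : Fin n := ⟨j, hjn⟩ with hk0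
        rw [Finset.sum_eq_single k0]
        · have hk0s : k0 ∈ s := by
            refine ⟨j.isLt, ?_⟩
            convert hpos using 2
          have hbk0 : b k0 = w k0 := hb k0 hk0s
          have hwk0 : w k0 = u j := by
            rw [hwdef]
            simp only [dif_pos (show ((k0 : ℕ) < m) from j.isLt)]
            rfl
          have : (k0 : ℕ) = (j : ℕ) := rfl
          rw [if_pos this, hbk0, hwk0, hudef]
          simp only [PiLp.smul_apply, WithLp.ofLp_toLp, smul_eq_mul]
          have hne : (σ j : ℂ) ≠ 0 := by
            simpa using hσj
          field_simp
        · intro k _ hk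
          have : (k : ℕ) ≠ (j : ℕ) := by
            intro hh
            exact hk (Fin.ext hh)
          simp [this]
        · intro hk
          exact absurd (Finset.mem_univ k0) hk
    have hstep : A = A * (Matrix.of (fun (i : Fin m) (j : Fin m) => v j i) *
        (Matrix.of (fun (i : Fin m) (j : Fin m) => v j i))ᴴ) := by
      rw [hVV, Matrix.mul_one]
    rw [hstep, ← Matrix.mul_assoc, hAV]
  · intro i j hij
    simp [Matrix.of_apply, hij]
  · intro i j hij
    exact ⟨σ j, hσ0 j, by simp [Matrix.of_apply, hij]⟩
  · intro i i' j j' hii hjj hij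
    have h1 : (i' : Fin m) ≤ j' := by
      rw [Fin.le_def]; omega
    have := hσanti i' j' h1
    simp only [Matrix.of_apply, if_pos hii, if_pos hjj, Complex.ofReal_re]
    exact this
end

section
/- For every quaternionic n×m matrix A there exist matrices U in the compact symplectic group Sp(n) (i.e. U*U = I, where U* is the quaternionic conjugate transpose) and V in Sp(m), and a quaternionic n×m matrix Σ with A = U * Σ * V*, such that Σ i j = 0 whenever the indices i and j are distinct (as natural numbers) and every diagonal entry of Σ is the coercion to the quaternions of a nonnegative real number. -/
open Matrix Quaternion

noncomputable section
namespace QSVD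

local notation "H" => ℍ[ℝ]

/-- quaternionic inner product on `Fin k → ℍ[ℝ]` -/
def qip {k : ℕ} (x y : Fin k → H) : H := ∑ i, star (x i) * y i

/-- squared euclidean norm -/
def Nq {k : ℕ} (x : Fin k → H) : ℝ := ∑ i, normSq (x i)

lemma coe_sum {k : ℕ} {s : Finset (Fin k)} (f : Fin k → ℝ) :
    ((∑ i ∈ s, f i : ℝ) : H) = ∑ i ∈ s, ((f i : ℝ) : H) :=
  map_sum (algebraMap ℝ H) _ _

lemma re_sum {ι : Type*} {s : Finset ι} (f : ι → H) :
    (∑ i ∈ s, f i).re = ∑ i ∈ s, (f i).re := by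
  induction s using Finset.cons_induction with
  | empty => simp
  | cons a s ha ih => simp [Finset.sum_cons, ih]

lemma normSq_mul' (x y : H) : normSq (x * y) = normSq x * normSq y :=
  _root_.map_mul normSq x y

lemma star_rsmul (r : ℝ) (x : H) : star (r • x) = r • star x := by
  ext <;> simp

lemma re_mul_comm (a b : H) : (a * b).re = (b * a).re := by
  simp [Quaternion.re_mul]; ring

lemma re_star_mul (a b : H) : (star a * b).re = (a * star b).re := by
  rw [re_mul_comm, ← Quaternion.re_star (b * star a)]
  simp

lemma eq_zero_of_re_mul {q : H} (h : ∀ c : H, (q * c).re = 0) : q = 0 := by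
  have h1 := h (star q)
  rw [Quaternion.self_mul_star, Quaternion.re_coe] at h1
  exact Quaternion.normSq_eq_zero.mp h1

lemma qip_self {k : ℕ} (x : Fin k → H) : qip x x = ((Nq x : ℝ) : H) := by
  rw [qip, Nq, coe_sum]
  exact Finset.sum_congr rfl fun i _ => (Quaternion.star_mul_self (x i)).symm ▸ rfl

lemma Nq_nonneg {k : ℕ} (x : Fin k → H) : 0 ≤ Nq x :=
  Finset.sum_nonneg fun i _ => Quaternion.normSq_nonneg

lemma Nq_eq_zero {k : ℕ} {x : Fin k → H} : Nq x = 0 ↔ x = 0 := by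
  constructor
  · intro h
    funext i
    have := (Finset.sum_eq_zero_iff_of_nonneg (fun i _ => Quaternion.normSq_nonneg)).mp h i
      (Finset.mem_univ i)
    exact Quaternion.normSq_eq_zero.mp this
  · intro h; subst h; simp [Nq]

lemma star_qip {k : ℕ} (x y : Fin k → H) : star (qip x y) = qip y x := by
  simp [qip, star_sum]

lemma Nq_add {k : ℕ} (x y : Fin k → H) :
    Nq (x + y) = Nq x + Nq y + 2 * (qip x y).re := by
  simp only [Nq, qip, Pi.add_apply, Quaternion.normSq_add, re_sum]
  rw [Finset.sum_add_distrib, Finset.sum_add_distrib, ← Finset.mul_sum]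
  congr 2
  exact Finset.sum_congr rfl fun i _ => (re_star_mul (x i) (y i)).symm

lemma Nq_smul {k : ℕ} (r : ℝ) (x : Fin k → H) : Nq (r • x) = r ^ 2 * Nq x := by
  simp [Nq, Quaternion.normSq_smul, Finset.mul_sum]


lemma qip_smul_right {k : ℕ} (x y : Fin k → H) (c : H) :
    qip x (fun i => y i * c) = qip x y * c := by
  simp [qip, Finset.sum_mul, mul_assoc]

lemma qip_rsmul_right {k : ℕ} (x y : Fin k → H) (r : ℝ) :
    qip x (r • y) = r • qip x y := by
  simp [qip, Finset.smul_sum, mul_smul_comm]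

lemma mulVec_rsmul {n m : ℕ} (A : Matrix (Fin n) (Fin m) H) (r : ℝ) (x : Fin m → H) :
    A.mulVec (r • x) = r • A.mulVec x := by
  funext i
  simp [Matrix.mulVec, dotProduct, Finset.smul_sum, mul_smul_comm]

lemma mulVec_qsmul {n m : ℕ} (A : Matrix (Fin n) (Fin m) H) (x : Fin m → H) (c : H) :
    A.mulVec (fun i => x i * c) = fun i => A.mulVec x i * c := by
  funext i
  simp [Matrix.mulVec, dotProduct, Finset.sum_mul, mul_assoc]

lemma quad_zero {a b : ℝ} (h : ∀ t : ℝ, t * b + t ^ 2 * a ≤ 0) : b = 0 := by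
  by_contra hb
  have ha : 0 < |a| + 1 := by positivity
  set u : ℝ := (|a| + 1)⁻¹ with hu
  have hupos : 0 < u := by positivity
  have huu : u * (|a| + 1) = 1 := inv_mul_cancel₀ (ne_of_gt ha)
  have h3 : u * |a| = 1 - u := by linarith [huu, (by ring : u * (|a| + 1) = u * |a| + u)]
  have hb2 : 0 < b ^ 2 := by positivity
  have h1 := h (b * u)
  have h4 : b ^ 2 * u + b ^ 2 * u ^ 2 * a ≤ 0 := by
    linarith [h1, (by ring : b * u * b + (b * u) ^ 2 * a = b ^ 2 * u + b ^ 2 * u ^ 2 * a)]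
  have h5 : b ^ 2 * u ^ 2 * (-a) ≤ b ^ 2 * u ^ 2 * |a| :=
    mul_le_mul_of_nonneg_left (neg_le_abs a) (by positivity)
  have h6 : b ^ 2 * u ^ 2 * |a| = b ^ 2 * u - b ^ 2 * u ^ 2 := by
    linear_combination (b ^ 2 * u) * h3
  have h7 : 0 < b ^ 2 * u ^ 2 := by positivity
  nlinarith [h4, h5, h6, h7]

/-- scaling consequence of the maximality -/
lemma max_scaled {n m : ℕ} (A : Matrix (Fin n) (Fin m) H) (v : Fin m → H)
    (hv : Nq v = 1) (hmax : ∀ x, Nq x = 1 → Nq (A.mulVec x) ≤ Nq (A.mulVec v))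
    (x : Fin m → H) : Nq (A.mulVec x) ≤ Nq (A.mulVec v) * Nq x := by
  rcases eq_or_ne (Nq x) 0 with h0 | h0
  · have : x = 0 := Nq_eq_zero.mp h0
    subst this
    simp [h0, Matrix.mulVec_zero, Nq_eq_zero.mpr rfl, le_refl]
  · have hpos : 0 < Nq x := lt_of_le_of_ne (Nq_nonneg x) (Ne.symm h0)
    set r : ℝ := (Real.sqrt (Nq x))⁻¹ with hr
    have hsq : r ^ 2 * Nq x = 1 := by
      rw [hr, inv_pow, Real.sq_sqrt hpos.le, inv_mul_cancel₀ h0]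
    have h1 : Nq (r • x) = 1 := by rw [Nq_smul, hsq]
    have h2 := hmax _ h1
    rw [mulVec_rsmul, Nq_smul] at h2
    have hrpos : 0 < r ^ 2 := by
      rw [hr, inv_pow]
      have := Real.sqrt_pos.mpr hpos
      positivity
    have e1 : Nq (A.mulVec x) = r ^ 2 * Nq (A.mulVec x) * Nq x := by
      rw [mul_comm (r ^ 2) _, mul_assoc, hsq, mul_one]
    rw [e1]
    exact mul_le_mul_of_nonneg_right h2 (Nq_nonneg x)

/-- key orthogonality lemma from maximality -/
lemma key_orth {n m : ℕ} (A : Matrix (Fin n) (Fin m) H) (v : Fin m → H)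
    (hv : Nq v = 1) (hmax : ∀ x, Nq x = 1 → Nq (A.mulVec x) ≤ Nq (A.mulVec v))
    (w : Fin m → H) (hw : qip v w = 0) :
    qip (A.mulVec v) (A.mulVec w) = 0 := by
  apply eq_zero_of_re_mul
  intro c
  set w' : Fin m → H := fun i => w i * c with hw'
  have hvw' : qip v w' = 0 := by rw [hw', qip_smul_right, hw, zero_mul]
  have key : ∀ t : ℝ, t * (2 * (qip (A.mulVec v) (A.mulVec w')).re)
      + t ^ 2 * (Nq (A.mulVec w') - Nq (A.mulVec v) * Nq w') ≤ 0 := by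
    intro t
    have h1 := max_scaled A v hv hmax (v + t • w')
    rw [Matrix.mulVec_add, mulVec_rsmul, Nq_add, Nq_add, qip_rsmul_right,
      qip_rsmul_right, Nq_smul, Nq_smul, hvw'] at h1
    simp only [Quaternion.re_smul, smul_eq_mul, Quaternion.re_zero, mul_zero] at h1
    rw [hv] at h1
    nlinarith [h1]
  have hb := quad_zero key
  have : (qip (A.mulVec v) (A.mulVec w')).re = 0 := by linarith
  rw [hw', mulVec_qsmul, qip_smul_right] at this
  exact this


section Householder

variable {m : ℕ}

lemma diag_unitary (d : Fin (m+1) → H) (hd : ∀ i, star (d i) * d i = 1)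
    (hd' : ∀ i, d i * star (d i) = 1) :
    (Matrix.diagonal d)ᴴ * Matrix.diagonal d = 1 ∧
    Matrix.diagonal d * (Matrix.diagonal d)ᴴ = 1 := by
  rw [Matrix.diagonal_conjTranspose, Matrix.diagonal_mul_diagonal,
    Matrix.diagonal_mul_diagonal]
  constructor
  · have : (fun i => star d i * d i) = fun _ => (1 : H) := funext fun i => hd i
    rw [this, Matrix.diagonal_one]
  · have : (fun i => d i * star d i) = fun _ => (1 : H) := funext fun i => hd' i
    rw [this, Matrix.diagonal_one]

/-- extend a unit vector to the first column of a symplectic matrix -/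
lemma exists_sp_col (v : Fin (m+1) → H) (hv : Nq v = 1) :
    ∃ W : Matrix (Fin (m+1)) (Fin (m+1)) H,
      Wᴴ * W = 1 ∧ W * Wᴴ = 1 ∧ (∀ i, W i 0 = v i) := by
  classical
  set a : H := v 0 with ha
  set φ : H := if a = 0 then 1 else star a * (((‖a‖⁻¹ : ℝ)) : H) with hφ
  have hnφ : normSq φ = 1 := by
    rw [hφ]
    split_ifs with h
    · simp
    · have hna : (‖a‖ : ℝ) ≠ 0 := norm_ne_zero_iff.mpr h
      rw [normSq_mul', Quaternion.normSq_star, Quaternion.normSq_coe,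
        Quaternion.normSq_eq_norm_mul_self]
      field_simp
  have hφφ' : φ * star φ = 1 := by
    rw [Quaternion.self_mul_star, hnφ]; exact Quaternion.coe_one
  have hφ'φ : star φ * φ = 1 := by
    rw [Quaternion.star_mul_self, hnφ]; exact Quaternion.coe_one
  have haφ : a * φ = ((‖a‖ : ℝ) : H) := by
    rw [hφ]
    split_ifs with h
    · simp [h]
    · rw [← mul_assoc, Quaternion.self_mul_star]
      rw [← Quaternion.coe_mul, Quaternion.normSq_eq_norm_mul_self]
      have hna : (‖a‖ : ℝ) ≠ 0 := norm_ne_zero_iff.mpr h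
      congr 1
      field_simp
  set v' : Fin (m+1) → H := fun i => v i * φ with hv'
  have hv'0 : v' 0 = ((‖a‖ : ℝ) : H) := by rw [hv']; exact haφ
  have hv'inv : ∀ i, v' i * star φ = v i := by
    intro i; rw [hv', mul_assoc, hφφ', mul_one]
  have hNv' : Nq v' = 1 := by
    rw [hv', Nq]
    have : ∀ i, normSq (v i * φ) = normSq (v i) := by
      intro i; rw [normSq_mul', hnφ, mul_one]
    simp only [this]
    exact hv
  set d : Fin (m+1) → H := fun i => if i = 0 then star φ else 1 with hd
  have hdU := diag_unitary d (fun i => by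
      rw [hd]; dsimp only; split_ifs <;> simp [hφφ', hφ'φ])
    (fun i => by rw [hd]; dsimp only; split_ifs <;> simp [hφφ', hφ'φ])
  set e0 : Fin (m+1) → H := fun i => if i = 0 then 1 else 0 with he0
  by_cases hcase : v' = e0
  · refine ⟨Matrix.diagonal d, hdU.1, hdU.2, fun i => ?_⟩
    rw [← hv'inv i, hcase, he0, hd, Matrix.diagonal_apply]
    dsimp only
    split_ifs <;> simp
  · -- Householder case
    set u : Fin (m+1) → H := e0 - v' with hu
    have hu0 : u ≠ 0 := by
      rw [hu, sub_ne_zero]; exact fun hh => hcase hh.symm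
    set ν : ℝ := Nq u with hν
    have hν0 : ν ≠ 0 := fun hh => hu0 (Nq_eq_zero.mp hh)
    have hNe0 : Nq e0 = 1 := by
      rw [Nq, he0]
      rw [Finset.sum_eq_single 0]
      · simp
      · intro b _ hb; simp [hb]
      · simp
    have hqe0v' : qip e0 v' = v' 0 := by
      rw [qip, he0]
      rw [Finset.sum_eq_single 0]
      · simp
      · intro b _ hb; simp [hb]
      · simp
    have hνval : ν = 2 - 2 * ‖a‖ := by
      have h1 : Nq (e0 + (-v')) = Nq e0 + Nq (-v') + 2 * (qip e0 (-v')).re := Nq_add _ _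
      have h2 : Nq (-v') = Nq v' := by
        simp [Nq, Quaternion.normSq_neg]
      have h3 : qip e0 (-v') = -(v' 0) := by
        rw [show (-v' : Fin (m+1) → H) = fun i => v' i * (-1) by funext i; simp,
          qip_smul_right, hqe0v']
        simp
      rw [hν, hu, sub_eq_add_neg, h1, h2, h3, hNe0, hNv', hv'0]
      simp only [Quaternion.re_neg, Quaternion.re_coe]
      ring
    have hu00 : u 0 = ((1 - ‖a‖ : ℝ) : H) := by
      have h0 : u 0 = e0 0 - v' 0 := by rw [hu]; rfl
      have h1 : e0 0 = 1 := by rw [he0]; simp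
      rw [h0, h1, hv'0, Quaternion.coe_sub, Quaternion.coe_one]
    set c : ℝ := 2 / ν with hc
    have hcν : c * (1 - ‖a‖) = 1 := by
      have h12 : (1 - ‖a‖ : ℝ) = ν / 2 := by rw [hνval]; ring
      rw [hc, h12, div_mul_div_comm, mul_comm ν 2, div_self (mul_ne_zero two_ne_zero hν0)]
    set M : Matrix (Fin (m+1)) (Fin (m+1)) H :=
      Matrix.of (fun i j => u i * star (u j)) with hM
    have hMapp : ∀ i j, M i j = u i * star (u j) := fun i j => rfl
    have hMH : Mᴴ = M := by
      apply Matrix.ext; intro i j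
      rw [Matrix.conjTranspose_apply]
      show star (u j * star (u i)) = u i * star (u j)
      rw [StarMul.star_mul, star_star]
    have hMM : M * M = ν • M := by
      apply Matrix.ext; intro i j
      rw [Matrix.mul_apply, Matrix.smul_apply, hMapp]
      have hterm : ∀ k, M i k * M k j = normSq (u k) • (u i * star (u j)) := by
        intro k
        rw [hMapp, hMapp, mul_assoc, ← mul_assoc (star (u k)),
          Quaternion.star_mul_self, Quaternion.coe_mul_eq_smul, mul_smul_comm]
      simp only [hterm]
      rw [← Finset.sum_smul, hν, Nq]
    set Hm : Matrix (Fin (m+1)) (Fin (m+1)) H := 1 - c • M with hHm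
    clear_value v' e0 u ν c M Hm
    have hHmH : Hmᴴ = Hm := by
      apply Matrix.ext; intro i j
      rw [hHm, Matrix.conjTranspose_apply, Matrix.sub_apply, Matrix.sub_apply,
        Matrix.smul_apply, Matrix.smul_apply, star_sub, star_rsmul]
      have h1 : star ((1 : Matrix (Fin (m+1)) (Fin (m+1)) H) j i)
          = (1 : Matrix (Fin (m+1)) (Fin (m+1)) H) i j := by
        by_cases h : j = i
        · subst h; simp
        · simp [Matrix.one_apply, h, Ne.symm h]
      have h2 : star (M j i) = M i j := by
        rw [← Matrix.conjTranspose_apply, hMH]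
      rw [h1, h2]
    have hHmHm : Hm * Hm = 1 := by
      rw [hHm]
      have hPP : (c • M) * (c • M) = c • M + c • M := by
        rw [Matrix.smul_mul, Matrix.mul_smul, hMM, smul_smul, smul_smul, ← add_smul]
        congr 1
        have hcν2 : c * ν = 2 := by rw [hc]; exact div_mul_cancel₀ 2 hν0
        calc c * c * ν = c * (c * ν) := by ring
          _ = c * 2 := by rw [hcν2]
          _ = c + c := by ring
      rw [sub_mul, mul_sub, mul_sub, hPP]
      simp only [Matrix.mul_one, Matrix.one_mul]
      abel
    have hHmcol : ∀ i, Hm i 0 = v' i := by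
      intro i
      rw [hHm]
      have h1 : (c • M) i 0 = u i * (c • star (u 0)) := by
        rw [Matrix.smul_apply, hMapp, mul_smul_comm]
      have h2 : c • star (u 0) = (1 : H) := by
        rw [hu00, Quaternion.star_coe, Quaternion.smul_coe, hcν, Quaternion.coe_one]
      rw [Matrix.sub_apply, h1, h2, mul_one, Matrix.one_apply]
      rw [hu]
      simp only [Pi.sub_apply, he0]
      split_ifs <;> abel
    refine ⟨Hm * Matrix.diagonal d, ?_, ?_, fun i => ?_⟩
    · rw [Matrix.conjTranspose_mul, Matrix.mul_assoc, ← Matrix.mul_assoc Hmᴴ,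
        hHmH, hHmHm, Matrix.one_mul, hdU.1]
    · rw [Matrix.conjTranspose_mul, Matrix.mul_assoc, ← Matrix.mul_assoc (Matrix.diagonal d),
        hdU.2, Matrix.one_mul, hHmH, hHmHm]
    · rw [Matrix.mul_diagonal, hHmcol, hd]
      dsimp only
      rw [if_pos rfl, hv'inv]

end Householder

section Corner

/-- `(k+1) × (l+1)` matrix with corner entry `c`, lower-right block `M`, zeros elsewhere -/
def corner {k l : ℕ} (c : H) (M : Matrix (Fin k) (Fin l) H) :
    Matrix (Fin (k+1)) (Fin (l+1)) H :=
  Matrix.of fun i j =>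
    Fin.cases (Fin.cases c (fun _ => 0) j) (fun i' => Fin.cases 0 (fun j' => M i' j') j) i

variable {k l p : ℕ} (c d : H) (M : Matrix (Fin k) (Fin l) H)

@[simp] lemma corner_zz : corner c M 0 0 = c := rfl
@[simp] lemma corner_zs (j : Fin l) : corner c M 0 j.succ = 0 := by
  simp [corner]
@[simp] lemma corner_sz (i : Fin k) : corner c M i.succ 0 = 0 := by
  simp [corner]
@[simp] lemma corner_ss (i : Fin k) (j : Fin l) : corner c M i.succ j.succ = M i j := by
  simp [corner]

lemma corner_mul (N : Matrix (Fin l) (Fin p) H) :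
    corner c M * corner d N = corner (c * d) (M * N) := by
  apply Matrix.ext; intro i j
  rw [Matrix.mul_apply, Fin.sum_univ_succ]
  induction i using Fin.cases with
  | zero =>
    induction j using Fin.cases with
    | zero => simp
    | succ j' => simp
  | succ i' =>
    induction j using Fin.cases with
    | zero => simp
    | succ j' => simp [Matrix.mul_apply]

lemma corner_conjTranspose : (corner c M)ᴴ = corner (star c) Mᴴ := by
  apply Matrix.ext; intro i j
  rw [Matrix.conjTranspose_apply]
  induction i using Fin.cases with
  | zero =>
    induction j using Fin.cases with
    | zero => simp
    | succ j' => simp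
  | succ i' =>
    induction j using Fin.cases with
    | zero => simp
    | succ j' => simp [Matrix.conjTranspose_apply]

lemma corner_one : corner (1 : H) (1 : Matrix (Fin k) (Fin k) H) = 1 := by
  apply Matrix.ext; intro i j
  induction i using Fin.cases with
  | zero =>
    induction j using Fin.cases with
    | zero => simp
    | succ j' => simp [Matrix.one_apply, (Fin.succ_ne_zero j').symm]
  | succ i' =>
    induction j using Fin.cases with
    | zero => simp [Matrix.one_apply, Fin.succ_ne_zero i']
    | succ j' =>
      simp [Matrix.one_apply, Fin.succ_inj]

end Corner

lemma qip_rsmul_left {k : ℕ} (x y : Fin k → H) (r : ℝ) :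
    qip (r • x) y = r • qip x y := by
  simp only [qip, Pi.smul_apply, star_rsmul, Finset.smul_sum, smul_mul_assoc]

lemma mulVec_ej {n m : ℕ} (A : Matrix (Fin n) (Fin m) H) (j : Fin m) :
    A.mulVec (fun k => if k = j then 1 else 0) = fun i => A i j := by
  funext i
  simp only [Matrix.mulVec, dotProduct, mul_ite, mul_one, mul_zero]
  rw [Finset.sum_ite_eq' Finset.univ j (A i)]
  simp

lemma entry_formula {n m : ℕ} (U : Matrix (Fin n) (Fin n) H) (A : Matrix (Fin n) (Fin m) H)
    (V : Matrix (Fin m) (Fin m) H) (i : Fin n) (j : Fin m) :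
    (Uᴴ * A * V) i j = qip (fun k => U k i) (A.mulVec (fun l => V l j)) := by
  simp only [Matrix.mul_apply, Matrix.conjTranspose_apply, qip, Matrix.mulVec,
    dotProduct, Finset.sum_mul, Finset.mul_sum, mul_assoc]
  exact Finset.sum_comm

lemma mul_unitary' {k : ℕ} {P Q : Matrix (Fin k) (Fin k) H}
    (hP : P * Pᴴ = 1) (hQ : Q * Qᴴ = 1) : (P * Q) * (P * Q)ᴴ = 1 := by
  rw [Matrix.conjTranspose_mul, Matrix.mul_assoc, ← Matrix.mul_assoc Q, hQ,
    Matrix.one_mul, hP]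

lemma mul_unitary {k : ℕ} {P Q : Matrix (Fin k) (Fin k) H}
    (hP : Pᴴ * P = 1) (hQ : Qᴴ * Q = 1) : (P * Q)ᴴ * (P * Q) = 1 := by
  rw [Matrix.conjTranspose_mul, Matrix.mul_assoc, ← Matrix.mul_assoc Pᴴ, hP,
    Matrix.one_mul, hQ]

lemma Nq_ej {m : ℕ} (j : Fin m) : Nq (fun i => if i = j then (1 : H) else 0) = 1 := by
  rw [Nq, Finset.sum_eq_single j]
  · simp
  · intro b _ hb; simp [hb]
  · simp

lemma Nq_pos_of_ne_zero {m : ℕ} {x : Fin m → H} (hx : x ≠ 0) : 0 < Nq x :=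
  lt_of_le_of_ne (Nq_nonneg x) (fun h => hx (Nq_eq_zero.mp h.symm))

lemma continuous_Nq {m : ℕ} : Continuous (Nq : (Fin m → H) → ℝ) := by
  apply continuous_finset_sum
  intro i _
  exact Quaternion.continuous_normSq.comp (continuous_apply i)

lemma continuous_mulVec {n m : ℕ} (A : Matrix (Fin n) (Fin m) H) :
    Continuous (fun x : Fin m → H => A.mulVec x) := by
  apply continuous_pi
  intro i
  simp only [Matrix.mulVec, dotProduct]
  apply continuous_finset_sum
  intro j _
  exact continuous_const.mul (continuous_apply j)

lemma exists_max {n m : ℕ} (A : Matrix (Fin n) (Fin (m+1)) H) :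
    ∃ v, Nq v = 1 ∧ ∀ x, Nq x = 1 → Nq (A.mulVec x) ≤ Nq (A.mulVec v) := by
  set S : Set (Fin (m+1) → H) := {x | Nq x = 1} with hS
  have hclosed : IsClosed S := isClosed_eq continuous_Nq continuous_const
  have hbdd : Bornology.IsBounded S := by
    rw [Metric.isBounded_iff_subset_closedBall 0]
    refine ⟨1, fun x hx => ?_⟩
    rw [Metric.mem_closedBall, dist_zero_right]
    rw [pi_norm_le_iff_of_nonneg zero_le_one]
    intro i
    have h1 : normSq (x i) ≤ Nq x := by
      rw [Nq]
      exact Finset.single_le_sum (f := fun i => normSq (x i)) (fun i _ => Quaternion.normSq_nonneg) (Finset.mem_univ i)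
    have h2 : Nq x = 1 := hx
    have h3 : ‖x i‖ * ‖x i‖ ≤ 1 := by
      rw [← Quaternion.normSq_eq_norm_mul_self]; rw [h2] at h1; exact h1
    nlinarith [norm_nonneg (x i)]
  have hcompact : IsCompact S := Metric.isCompact_of_isClosed_isBounded hclosed hbdd
  have hne : S.Nonempty := ⟨fun i => if i = 0 then 1 else 0, Nq_ej 0⟩
  have hcont : ContinuousOn (fun x : Fin (m+1) → H => Nq (A.mulVec x)) S :=
    (continuous_Nq.comp (continuous_mulVec A)).continuousOn
  obtain ⟨v, hvS, hvmax⟩ := hcompact.exists_isMaxOn hne hcont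
  exact ⟨v, hvS, fun x hx => hvmax hx⟩

lemma svd_aux : ∀ (n m : ℕ) (A : Matrix (Fin n) (Fin m) H),
    ∃ (U : Matrix (Fin n) (Fin n) H) (V : Matrix (Fin m) (Fin m) H)
      (D : Matrix (Fin n) (Fin m) H),
      Uᴴ * U = 1 ∧ U * Uᴴ = 1 ∧ Vᴴ * V = 1 ∧ V * Vᴴ = 1 ∧ A = U * D * Vᴴ ∧
      (∀ (i : Fin n) (j : Fin m), (i : ℕ) ≠ (j : ℕ) → D i j = 0) ∧
      (∀ (i : Fin n) (j : Fin m), (i : ℕ) = (j : ℕ) →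
        ∃ r : ℝ, 0 ≤ r ∧ D i j = ((r : ℝ) : H)) := by
  intro n
  induction n with
  | zero =>
    intro m A
    refine ⟨1, 1, 0, ?_, ?_, ?_, ?_, ?_, ?_, ?_⟩ <;>
      first
        | (apply Matrix.ext; intro i j; exact i.elim0)
        | (intro i; exact i.elim0)
        | (rw [Matrix.conjTranspose_one, Matrix.one_mul])
  | succ n ih =>
    intro m A
    match m with
    | 0 =>
      refine ⟨1, 1, 0, ?_, ?_, ?_, ?_, ?_, ?_, ?_⟩ <;>
        first
          | (apply Matrix.ext; intro i j; exact j.elim0)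
          | (intro i j; exact j.elim0)
          | (rw [Matrix.conjTranspose_one, Matrix.one_mul])
    | m0 + 1 =>
      by_cases hA : A = 0
      · refine ⟨1, 1, 0, ?_, ?_, ?_, ?_, ?_, ?_, ?_⟩
        · rw [Matrix.conjTranspose_one, Matrix.one_mul]
        · rw [Matrix.conjTranspose_one, Matrix.one_mul]
        · rw [Matrix.conjTranspose_one, Matrix.one_mul]
        · rw [Matrix.conjTranspose_one, Matrix.one_mul]
        · rw [hA, Matrix.mul_zero, Matrix.zero_mul]
        · intro i j _; rfl
        · intro i j _
          refine ⟨0, le_refl 0, ?_⟩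
          rw [Quaternion.coe_zero]; rfl
      · obtain ⟨v, hv1, hmax⟩ := exists_max A
        have hex : ∃ i j, A i j ≠ 0 := by
          by_contra h
          push_neg at h
          exact hA (Matrix.ext fun i j => h i j)
        obtain ⟨i0, j0, hij⟩ := hex
        have hfv : 0 < Nq (A.mulVec v) := by
          have hx0 : Nq (fun k : Fin (m0+1) => if k = j0 then (1 : H) else 0) = 1 := Nq_ej j0
          have hpos0 : 0 < Nq (A.mulVec (fun k => if k = j0 then 1 else 0)) := by
            rw [mulVec_ej]
            apply Nq_pos_of_ne_zero
            intro h
            exact hij (congrFun h i0)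
          exact lt_of_lt_of_le hpos0 (hmax _ hx0)
        set σ : ℝ := Real.sqrt (Nq (A.mulVec v)) with hσdef
        have hσpos : 0 < σ := Real.sqrt_pos.mpr hfv
        have hσ2 : σ ^ 2 = Nq (A.mulVec v) := Real.sq_sqrt hfv.le
        set u : Fin (n+1) → H := σ⁻¹ • A.mulVec v with hudef
        have hNu : Nq u = 1 := by
          rw [hudef, Nq_smul, ← hσ2, inv_pow]
          exact inv_mul_cancel₀ (pow_ne_zero 2 (ne_of_gt hσpos))
        have hAvu : A.mulVec v = σ • u := by
          rw [hudef, smul_smul, mul_inv_cancel₀ (ne_of_gt hσpos), one_smul]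
        obtain ⟨U, hU1, hU2, hUcol⟩ := exists_sp_col u hNu
        obtain ⟨V, hV1, hV2, hVcol⟩ := exists_sp_col v hv1
        set B : Matrix (Fin (n+1)) (Fin (m0+1)) H := Uᴴ * A * V with hBdef
        have hcolV0 : (fun l => V l 0) = v := funext hVcol
        have hcolU0 : (fun k => U k 0) = u := funext hUcol
        have hBentry : ∀ i j, B i j = qip (fun k => U k i) (A.mulVec (fun l => V l j)) :=
          fun i j => entry_formula U A V i j
        have hUorth : ∀ i i', qip (fun k => U k i) (fun k => U k i')
            = (1 : Matrix (Fin (n+1)) (Fin (n+1)) H) i i' := by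
          intro i i'
          rw [← hU1, Matrix.mul_apply]
          simp only [qip, Matrix.conjTranspose_apply]
        have hVorth : ∀ j j', qip (fun l => V l j) (fun l => V l j')
            = (1 : Matrix (Fin (m0+1)) (Fin (m0+1)) H) j j' := by
          intro j j'
          rw [← hV1, Matrix.mul_apply]
          simp only [qip, Matrix.conjTranspose_apply]
        have hBc0 : ∀ i, B i 0 = σ • ((1 : Matrix (Fin (n+1)) (Fin (n+1)) H) i 0) := by
          intro i
          rw [hBentry, hcolV0, hAvu, qip_rsmul_right, ← hcolU0, hUorth]
        have hB00 : B 0 0 = ((σ : ℝ) : H) := by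
          rw [hBc0 0, Matrix.one_apply_eq, ← Quaternion.coe_one, Quaternion.smul_coe, mul_one]
        have hBs0 : ∀ i : Fin n, B i.succ 0 = 0 := by
          intro i
          rw [hBc0, Matrix.one_apply_ne (Fin.succ_ne_zero i), smul_zero]
        have hBr0 : ∀ j : Fin m0, B 0 j.succ = 0 := by
          intro j
          have hqvw : qip v (fun l => V l j.succ) = 0 := by
            rw [← hcolV0, hVorth]
            exact Matrix.one_apply_ne (Fin.succ_ne_zero j).symm
          rw [hBentry, hcolU0, hudef, qip_rsmul_left,
            key_orth A v hv1 hmax _ hqvw, smul_zero]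
        set B' : Matrix (Fin n) (Fin m0) H :=
          Matrix.of (fun i j => B i.succ j.succ) with hB'def
        obtain ⟨U', V', D', hU'1, hU'2, hV'1, hV'2, hBfac, hDoff, hDdiag⟩ := ih m0 B'
        have hBcorner : B = corner ((σ : ℝ) : H) B' := by
          apply Matrix.ext; intro i j
          induction i using Fin.cases with
          | zero =>
            induction j using Fin.cases with
            | zero => rw [corner_zz, hB00]
            | succ j' => rw [corner_zs]; exact hBr0 j'
          | succ i' =>
            induction j using Fin.cases with
            | zero => rw [corner_sz]; exact hBs0 i'
            | succ j' => rw [corner_ss]; rfl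
        have hAUBV : A = U * B * Vᴴ := by
          rw [hBdef]
          have h1 : U * (Uᴴ * A * V) * Vᴴ = (U * Uᴴ) * A * (V * Vᴴ) := by
            simp only [Matrix.mul_assoc]
          rw [h1, hU2, hV2, Matrix.one_mul, Matrix.mul_one]
        have hcU'1 : (corner 1 U')ᴴ * corner 1 U' = 1 := by
          rw [corner_conjTranspose, corner_mul, star_one, one_mul, hU'1, corner_one]
        have hcU'2 : corner 1 U' * (corner 1 U')ᴴ = 1 := by
          rw [corner_conjTranspose, corner_mul, star_one, one_mul, hU'2, corner_one]
        have hcV'1 : (corner 1 V')ᴴ * corner 1 V' = 1 := by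
          rw [corner_conjTranspose, corner_mul, star_one, one_mul, hV'1, corner_one]
        have hcV'2 : corner 1 V' * (corner 1 V')ᴴ = 1 := by
          rw [corner_conjTranspose, corner_mul, star_one, one_mul, hV'2, corner_one]
        refine ⟨U * corner 1 U', V * corner 1 V', corner ((σ : ℝ) : H) D',
          mul_unitary hU1 hcU'1, mul_unitary' hU2 hcU'2,
          mul_unitary hV1 hcV'1, mul_unitary' hV2 hcV'2, ?_, ?_, ?_⟩
        · calc A = U * B * Vᴴ := hAUBV
            _ = U * corner ((σ : ℝ) : H) B' * Vᴴ := by rw [hBcorner]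
            _ = U * (corner 1 U' * corner ((σ : ℝ) : H) D' * (corner 1 V')ᴴ) * Vᴴ := by
                rw [corner_conjTranspose, star_one, corner_mul, corner_mul, one_mul,
                  mul_one, ← hBfac]
            _ = (U * corner 1 U') * corner ((σ : ℝ) : H) D' * (V * corner 1 V')ᴴ := by
                rw [Matrix.conjTranspose_mul]
                simp only [Matrix.mul_assoc]
        · intro i j hij
          induction i using Fin.cases with
          | zero =>
            induction j using Fin.cases with
            | zero => exact absurd rfl hij
            | succ j' => rw [corner_zs]
          | succ i' =>
            induction j using Fin.cases with
            | zero => rw [corner_sz]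
            | succ j' =>
              rw [corner_ss]
              refine hDoff i' j' (fun h => hij ?_)
              simp only [Fin.val_succ, h]
        · intro i j hij
          induction i using Fin.cases with
          | zero =>
            induction j using Fin.cases with
            | zero => exact ⟨σ, hσpos.le, corner_zz _ _⟩
            | succ j' =>
              exfalso
              rw [Fin.val_zero, Fin.val_succ] at hij
              exact Nat.succ_ne_zero _ hij.symm
          | succ i' =>
            induction j using Fin.cases with
            | zero =>
              exfalso
              rw [Fin.val_zero, Fin.val_succ] at hij
              exact Nat.succ_ne_zero _ hij
            | succ j' =>
              rw [corner_ss]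
              refine hDdiag i' j' ?_
              rw [Fin.val_succ, Fin.val_succ] at hij
              exact Nat.succ_injective hij

end QSVD

/-- Quaternionic SVD: every `n × m` matrix over the real quaternions factors as
`A = U * Σ * V*` with `U ∈ Sp(n)`, `V ∈ Sp(m)` and `Σ` rectangular-diagonal with
diagonal entries that are (coercions of) nonnegative reals. -/
theorem quaternion_svd (n m : ℕ) (A : Matrix (Fin n) (Fin m) ℍ[ℝ]) :
    ∃ (U : Matrix (Fin n) (Fin n) ℍ[ℝ]) (V : Matrix (Fin m) (Fin m) ℍ[ℝ])
      (D : Matrix (Fin n) (Fin m) ℍ[ℝ]),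
      Uᴴ * U = 1 ∧ Vᴴ * V = 1 ∧ A = U * D * Vᴴ ∧
      (∀ (i : Fin n) (j : Fin m), (i : ℕ) ≠ (j : ℕ) → D i j = 0) ∧
      (∀ (i : Fin n) (j : Fin m), (i : ℕ) = (j : ℕ) →
        ∃ r : ℝ, 0 ≤ r ∧ D i j = (r : ℍ[ℝ])) := by
  obtain ⟨U, V, D, h1, _, h3, _, h5, h6, h7⟩ := QSVD.svd_aux n m A
  exact ⟨U, V, D, h1, h3, h5, h6, h7⟩
end
end

section
/- For every n×n matrix A over the real quaternions ℍ there exist quaternionic n×n matrices P and S with P* = P and S* = S such that P = B* * B for some quaternionic matrix B and S = C* * C for some quaternionic matrix C, and a matrix W in the compact symplectic group Sp(n) (W*W = I), such that A = W * P and A = S * W. -/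
open Matrix Quaternion Polynomial Filter
open scoped ComplexOrder Topology

noncomputable section

section SqrtCompat
open scoped MatrixOrder
variable {m : Type*} [Fintype m] [DecidableEq m]

def Matrix.PosSemidef.sqrt {A : Matrix m m ℂ} (_hA : A.PosSemidef) : Matrix m m ℂ := CFC.sqrt A

lemma Matrix.PosSemidef.posSemidef_sqrt {A : Matrix m m ℂ} (hA : A.PosSemidef) :
    hA.sqrt.PosSemidef := (CFC.sqrt_nonneg A).posSemidef

lemma Matrix.PosSemidef.sqrt_mul_self {A : Matrix m m ℂ} (hA : A.PosSemidef) :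
    hA.sqrt * hA.sqrt = A := CFC.sqrt_mul_sqrt_self A hA.nonneg

lemma Matrix.PosSemidef.eq_sqrt_of_sq_eq {A B : Matrix m m ℂ} (hA : A.PosSemidef)
    (hB : B.PosSemidef) (h : A ^ 2 = B) : A = hB.sqrt :=
  (CFC.sqrt_unique (by rw [← sq]; exact h) hA.nonneg).symm

end SqrtCompat

namespace QPolar


def phi (q : ℍ[ℝ]) : Matrix (Fin 2) (Fin 2) ℂ :=
  !![⟨q.re, q.imI⟩, ⟨q.imJ, q.imK⟩; ⟨-q.imJ, q.imK⟩, ⟨q.re, -q.imI⟩]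

def phiHom : ℍ[ℝ] →+* Matrix (Fin 2) (Fin 2) ℂ where
  toFun := phi
  map_one' := by
    ext i j
    fin_cases i <;> fin_cases j <;>
      simp [phi, Matrix.one_apply, Complex.ext_iff]
  map_mul' q r := by
    ext i j
    fin_cases i <;> fin_cases j <;>
      · apply Complex.ext <;>
          simp [phi, Matrix.mul_apply, Fin.sum_univ_two, Complex.ext_iff, re_mul, imI_mul,
            imJ_mul, imK_mul] <;> ring
  map_zero' := by
    ext i j
    fin_cases i <;> fin_cases j <;> simp [phi, Complex.ext_iff] <;> ring
  map_add' q r := by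
    ext i j
    fin_cases i <;> fin_cases j <;> simp [phi, Complex.ext_iff] <;> ring

lemma phi_injective : Function.Injective phi := by
  intro q r h
  have h0 := congrFun (congrFun h 0) 0
  have h1 := congrFun (congrFun h 0) 1
  simp [phi, Complex.ext_iff] at h0 h1
  ext <;> tauto

lemma phi_star (q : ℍ[ℝ]) : phi (star q) = (phi q)ᴴ := by
  ext i j
  fin_cases i <;> fin_cases j <;>
    simp [phi, conjTranspose_apply, Complex.ext_iff]



lemma phiHom_eq : ⇑phiHom = phi := rfl

variable (n : ℕ)

def emb : Matrix (Fin n) (Fin n) ℍ[ℝ] →+* Matrix (Fin n × Fin 2) (Fin n × Fin 2) ℂ :=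
  (Matrix.compRingEquiv (Fin n) (Fin 2) ℂ).toRingHom.comp (RingHom.mapMatrix phiHom)

lemma emb_apply (A : Matrix (Fin n) (Fin n) ℍ[ℝ]) (p q : Fin n × Fin 2) :
    emb n A p q = phi (A p.1 q.1) p.2 q.2 := by
  simp [emb, Matrix.compRingEquiv, Matrix.compAddEquiv, Matrix.comp, phiHom_eq]
  rfl

lemma emb_injective : Function.Injective (emb n) := by
  intro A B h
  funext i j
  exact phi_injective (by ext a b; simpa [emb_apply] using congrFun (congrFun h (i, a)) (j, b))

lemma emb_conjTranspose (A : Matrix (Fin n) (Fin n) ℍ[ℝ]) :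
    emb n Aᴴ = (emb n A)ᴴ := by
  ext p q
  simp only [emb_apply, conjTranspose_apply, phi_star]




def jq : ℍ[ℝ] := ⟨0, 0, 1, 0⟩

lemma jq_mul_star : jq * star jq = 1 := by
  ext <;> simp [re_mul, imI_mul, imJ_mul, imK_mul] <;> simp [jq]

lemma star_jq_mul : star jq * jq = 1 := by
  ext <;> simp [re_mul, imI_mul, imJ_mul, imK_mul] <;> simp [jq]

variable (n : ℕ)

def Jmat : Matrix (Fin n × Fin 2) (Fin n × Fin 2) ℂ :=
  emb n (Matrix.diagonal fun _ => jq)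

lemma Jmat_mul_conjTranspose : Jmat n * (Jmat n)ᴴ = 1 := by
  rw [Jmat, ← emb_conjTranspose, ← _root_.map_mul, diagonal_conjTranspose, diagonal_mul_diagonal]
  simpa [jq_mul_star] using map_one (emb n)

lemma conjTranspose_mul_Jmat : (Jmat n)ᴴ * Jmat n = 1 := by
  rw [Jmat, ← emb_conjTranspose, ← _root_.map_mul, diagonal_conjTranspose, diagonal_mul_diagonal]
  simpa [star_jq_mul] using map_one (emb n)

/-- entrywise complex conjugation -/
def cj (M : Matrix (Fin n × Fin 2) (Fin n × Fin 2) ℂ) : Matrix (Fin n × Fin 2) (Fin n × Fin 2) ℂ :=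
  M.map (starRingEnd ℂ)

lemma cj_mul (M N : Matrix (Fin n × Fin 2) (Fin n × Fin 2) ℂ) :
    cj n (M * N) = cj n M * cj n N := Matrix.map_mul

lemma cj_conjTranspose (M : Matrix (Fin n × Fin 2) (Fin n × Fin 2) ℂ) :
    cj n Mᴴ = (cj n M)ᴴ :=
  Matrix.conjTranspose_map _ fun _ => rfl

/-- the quaternionic reality condition on complex matrices -/
def QS (M : Matrix (Fin n × Fin 2) (Fin n × Fin 2) ℂ) : Prop :=
  Jmat n * cj n M = M * Jmat n

lemma QS.cj_eq {M} (h : QS n M) : cj n M = (Jmat n)ᴴ * M * Jmat n := by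
  have := congrArg (fun X => (Jmat n)ᴴ * X) h
  simpa [← mul_assoc, conjTranspose_mul_Jmat] using this

lemma QS.of_cj_eq {M} (h : cj n M = (Jmat n)ᴴ * M * Jmat n) : QS n M := by
  rw [QS, h, ← mul_assoc, ← mul_assoc, Jmat_mul_conjTranspose, one_mul]

lemma QS.one : QS n 1 := by simp [QS, cj]

lemma QS.mul {M N} (hM : QS n M) (hN : QS n N) : QS n (M * N) := by
  rw [QS, cj_mul, ← mul_assoc, hM, mul_assoc, hN, ← mul_assoc]

lemma QS.conjTranspose {M} (hM : QS n M) : QS n Mᴴ := by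
  apply QS.of_cj_eq
  rw [cj_conjTranspose, hM.cj_eq]
  simp [Matrix.conjTranspose_mul, mul_assoc]

lemma QS.add {M N} (hM : QS n M) (hN : QS n N) : QS n (M + N) := by
  unfold QS cj at *
  rw [Matrix.map_add _ (map_add _) , mul_add, hM, hN, add_mul]

lemma QS.real_smul_one (t : ℝ) : QS n ((t : ℂ) • 1) := by
  have h1 : cj n ((t : ℂ) • 1) = (t : ℂ) • 1 := by
    ext p q
    simp [cj, Matrix.one_apply, apply_ite (starRingEnd ℂ)]
  rw [QS, h1, mul_smul_comm, smul_mul_assoc, one_mul, mul_one]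

lemma QS.inv {M} (hM : QS n M) (hu : IsUnit M.det) : QS n M⁻¹ := by
  have hcj : cj n M⁻¹ = (cj n M)⁻¹ := by
    refine (Matrix.inv_eq_right_inv ?_).symm
    rw [← cj_mul, Matrix.mul_nonsing_inv _ hu]
    simp [cj]
  apply QS.of_cj_eq
  rw [hcj, hM.cj_eq]
  rw [Matrix.mul_inv_rev, Matrix.mul_inv_rev]
  have hJi : (Jmat n)⁻¹ = (Jmat n)ᴴ := Matrix.inv_eq_right_inv (Jmat_mul_conjTranspose n)
  have hJHi : ((Jmat n)ᴴ)⁻¹ = Jmat n := Matrix.inv_eq_right_inv (conjTranspose_mul_Jmat n)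
  rw [hJi, hJHi, mul_assoc]

lemma QS.sqrt {M} (hM : QS n M) (hP : M.PosSemidef) : QS n hP.sqrt := by
  set B := hP.sqrt with hB
  have hBps : B.PosSemidef := hP.posSemidef_sqrt
  have hBH : Bᴴ = B := hBps.1
  -- τ B := J * cj B * Jᴴ is PSD with square M
  have hcjB : cj n B = Bᵀ := by
    have := hBps.1
    ext p q
    simpa [cj, Matrix.transpose_apply, Matrix.conjTranspose_apply] using
      congrFun (congrFun this q) p
  have hps : (Jmat n * cj n B * (Jmat n)ᴴ).PosSemidef := by
    rw [hcjB]
    exact hBps.transpose.mul_mul_conjTranspose_same (Jmat n)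
  have hsq : (Jmat n * cj n B * (Jmat n)ᴴ) ^ 2 = M := by
    have : (Jmat n * cj n B * (Jmat n)ᴴ) ^ 2
        = Jmat n * cj n (B * B) * (Jmat n)ᴴ := by
      rw [pow_two, cj_mul n B B]
      have : (Jmat n)ᴴ * Jmat n = 1 := conjTranspose_mul_Jmat n
      calc Jmat n * cj n B * (Jmat n)ᴴ * (Jmat n * cj n B * (Jmat n)ᴴ)
          = Jmat n * cj n B * ((Jmat n)ᴴ * Jmat n) * cj n B * (Jmat n)ᴴ := by
            simp only [mul_assoc]
        _ = Jmat n * (cj n B * cj n B) * (Jmat n)ᴴ := by rw [this]; simp only [mul_assoc, mul_one]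
        _ = _ := by simp only [mul_assoc]
    rw [this, hP.sqrt_mul_self]
    have := hM.cj_eq
    rw [this]
    calc Jmat n * ((Jmat n)ᴴ * M * Jmat n) * (Jmat n)ᴴ
        = (Jmat n * (Jmat n)ᴴ) * M * (Jmat n * (Jmat n)ᴴ) := by simp only [mul_assoc]
      _ = M := by rw [Jmat_mul_conjTranspose]; simp
  have := hps.eq_sqrt_of_sq_eq hP hsq
  apply QS.of_cj_eq
  have h2 : cj n B = (Jmat n)ᴴ * (Jmat n * cj n B * (Jmat n)ᴴ) * Jmat n := by
    calc cj n B = ((Jmat n)ᴴ * Jmat n) * cj n B * ((Jmat n)ᴴ * Jmat n) := by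
          rw [conjTranspose_mul_Jmat]; simp
      _ = _ := by simp only [mul_assoc]
  rw [h2, this, ← hB]

variable (n : ℕ)

lemma Jmat_apply (p q : Fin n × Fin 2) :
    Jmat n p q = if p.1 = q.1 then (!![0,1;-1,0] : Matrix (Fin 2) (Fin 2) ℂ) p.2 q.2 else 0 := by
  rw [Jmat, emb_apply, Matrix.diagonal_apply]
  obtain ⟨i, a⟩ := p
  obtain ⟨j, b⟩ := q
  dsimp only
  split_ifs <;> fin_cases a <;> fin_cases b <;> simp [phi, jq, Complex.ext_iff]

lemma mulJ_apply₀ (M : Matrix (Fin n × Fin 2) (Fin n × Fin 2) ℂ) (p : Fin n × Fin 2) (j : Fin n) :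
    (M * Jmat n) p (j, 0) = -M p (j, 1) := by
  rw [Matrix.mul_apply, Fintype.sum_prod_type]
  simp [Jmat_apply, Finset.sum_ite_eq', Fin.sum_univ_two]

lemma mulJ_apply₁ (M : Matrix (Fin n × Fin 2) (Fin n × Fin 2) ℂ) (p : Fin n × Fin 2) (j : Fin n) :
    (M * Jmat n) p (j, 1) = M p (j, 0) := by
  rw [Matrix.mul_apply, Fintype.sum_prod_type]
  simp [Jmat_apply, Finset.sum_ite_eq', Fin.sum_univ_two]

lemma Jcj_apply₀ (M : Matrix (Fin n × Fin 2) (Fin n × Fin 2) ℂ) (i : Fin n) (q : Fin n × Fin 2) :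
    (Jmat n * cj n M) (i, 0) q = (starRingEnd ℂ) (M (i, 1) q) := by
  rw [Matrix.mul_apply, Fintype.sum_prod_type]
  simp [Jmat_apply, cj, Finset.sum_ite_eq, Fin.sum_univ_two]

lemma Jcj_apply₁ (M : Matrix (Fin n × Fin 2) (Fin n × Fin 2) ℂ) (i : Fin n) (q : Fin n × Fin 2) :
    (Jmat n * cj n M) (i, 1) q = -(starRingEnd ℂ) (M (i, 0) q) := by
  rw [Matrix.mul_apply, Fintype.sum_prod_type]
  simp [Jmat_apply, cj, Finset.sum_ite_eq, Fin.sum_univ_two]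

lemma QS_emb (A : Matrix (Fin n) (Fin n) ℍ[ℝ]) : QS n (emb n A) := by
  funext p q
  obtain ⟨i, a⟩ := p
  obtain ⟨j, b⟩ := q
  fin_cases a <;> fin_cases b <;>
    simp only [Fin.mk_zero, Fin.mk_one, Fin.isValue, Jcj_apply₀, Jcj_apply₁, mulJ_apply₀,
      mulJ_apply₁, emb_apply] <;>
    simp [phi, Complex.ext_iff]

lemma QS.exists_emb {M : Matrix (Fin n × Fin 2) (Fin n × Fin 2) ℂ} (h : QS n M) :
    ∃ A, emb n A = M := by
  refine ⟨Matrix.of fun i j =>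
    (⟨(M (i,0) (j,0)).re, (M (i,0) (j,0)).im, (M (i,0) (j,1)).re, (M (i,0) (j,1)).im⟩ : ℍ[ℝ]), ?_⟩
  have h10 : ∀ i j, M (i,1) (j,0) = -(starRingEnd ℂ) (M (i,0) (j,1)) := by
    intro i j
    have := congrFun (congrFun h (i, 0)) (j, 0)
    rw [Jcj_apply₀, mulJ_apply₀] at this
    have := congrArg (starRingEnd ℂ) this
    simpa using this
  have h11 : ∀ i j, M (i,1) (j,1) = (starRingEnd ℂ) (M (i,0) (j,0)) := by
    intro i j
    have := congrFun (congrFun h (i, 0)) (j, 1)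
    rw [Jcj_apply₀, mulJ_apply₁] at this
    have := congrArg (starRingEnd ℂ) this
    simpa using this
  funext p q
  obtain ⟨i, a⟩ := p
  obtain ⟨j, b⟩ := q
  fin_cases a <;> fin_cases b <;> rw [emb_apply] <;>
    simp [phi, h10, h11, Complex.ext_iff] <;> exact ⟨rfl, rfl⟩


variable {N : Type*} [Fintype N] [DecidableEq N]

/-- evaluation of the characteristic polynomial -/
lemma eval_charpoly' (M : Matrix N N ℂ) (t : ℂ) :
    M.charpoly.eval t = (t • (1 : Matrix N N ℂ) - M).det := by
  rw [Matrix.charpoly, ← Polynomial.coe_evalRingHom, RingHom.map_det]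
  congr 1
  ext i j
  by_cases h : i = j
  · subst h; simp [charmatrix_apply_eq, Matrix.one_apply, Matrix.smul_apply]
  · simp [charmatrix_apply_ne _ _ _ h, Matrix.one_apply_ne h, Matrix.smul_apply]

lemma finite_bad (M : Matrix N N ℂ) :
    {t : ℝ | ¬ IsUnit (M + (t : ℂ) • 1)}.Finite := by
  have hsub : {t : ℝ | ¬ IsUnit (M + (t : ℂ) • 1)} ⊆
      (fun t : ℝ => (t : ℂ)) ⁻¹' {z : ℂ | (-M).charpoly.IsRoot z} := by
    intro t ht
    simp only [Set.mem_setOf_eq] at ht ⊢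
    by_contra hroot
    apply ht
    rw [Matrix.isUnit_iff_isUnit_det]
    apply Ne.isUnit
    intro h0
    apply hroot
    simp only [Set.mem_preimage, Set.mem_setOf_eq, IsRoot.def]
    rw [eval_charpoly', sub_neg_eq_add, ← h0]
    rw [add_comm]
  refine Set.Finite.subset (Set.Finite.preimage ?_ ?_) hsub
  · intro a _ b _ h
    simpa using h
  · exact Polynomial.finite_setOf_isRoot (Matrix.charpoly_monic _).ne_zero

/-- a sequence of positive reals tending to zero with `M + t k • 1` invertible -/
lemma exists_good_seq (M : Matrix N N ℂ) :
    ∃ t : ℕ → ℝ, (∀ k, IsUnit (M + (t k : ℂ) • 1)) ∧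
      Filter.Tendsto t Filter.atTop (nhds 0) := by
  have h : ∀ k : ℕ, ∃ x : ℝ, x ∈ Set.Ioo (0:ℝ) (1/(k+1)) \ {t : ℝ | ¬ IsUnit (M + (t:ℂ) • 1)} := by
    intro k
    apply Set.Infinite.nonempty
    apply Set.Infinite.diff _ (finite_bad M)
    exact Set.Ioo_infinite (by positivity)
  choose t ht using h
  refine ⟨t, fun k => ?_, ?_⟩
  · have h := (ht k).2
    simp only [Set.mem_setOf_eq, not_not] at h
    exact h
  have h0 : ∀ k, 0 ≤ t k := fun k => ((ht k).1.1).le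
  have h1 : ∀ k, t k ≤ 1/(k+1) := fun k => ((ht k).1.2).le
  refine squeeze_zero h0 h1 ?_
  exact tendsto_one_div_add_atTop_nhds_zero_nat
lemma QS.isClosed : IsClosed {M : Matrix (Fin n × Fin 2) (Fin n × Fin 2) ℂ | QS n M} := by
  apply isClosed_eq
  · exact continuous_const.matrix_mul (continuous_id.matrix_map continuous_star)
  · exact continuous_id.matrix_mul continuous_const



variable (n : ℕ)

/-- polar decomposition of an invertible matrix satisfying the reality condition -/
lemma polar_invertible {M : Matrix (Fin n × Fin 2) (Fin n × Fin 2) ℂ}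
    (hQ : QS n M) (hM : IsUnit M) :
    ∃ W P, QS n W ∧ QS n P ∧ Wᴴ * W = 1 ∧ P.PosSemidef ∧ M = W * P := by
  have hMM : (Mᴴ * M).PosSemidef := posSemidef_conjTranspose_mul_self M
  set P := hMM.sqrt with hPdef
  have hPP : P * P = Mᴴ * M := hMM.sqrt_mul_self
  have hPps : P.PosSemidef := hMM.posSemidef_sqrt
  have hPH : Pᴴ = P := hPps.1
  have hMdet : IsUnit M.det := (Matrix.isUnit_iff_isUnit_det M).mp hM
  have hPdet : IsUnit P.det := by
    have h1 : P.det * P.det = Mᴴ.det * M.det := by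
      rw [← Matrix.det_mul, hPP, Matrix.det_mul]
    have : IsUnit (P.det * P.det) := by
      rw [h1, Matrix.det_conjTranspose]
      exact (hMdet.star).mul hMdet
    exact isUnit_of_mul_isUnit_left this
  have hQMM : QS n (Mᴴ * M) := QS.mul n (QS.conjTranspose n hQ) hQ
  have hQP : QS n P := QS.sqrt n hQMM hMM
  refine ⟨M * P⁻¹, P, QS.mul n hQ (QS.inv n hQP hPdet), hQP, ?_, hPps, ?_⟩
  · have hPinvH : (P⁻¹)ᴴ = P⁻¹ := by rw [Matrix.conjTranspose_nonsing_inv, hPH]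
    calc (M * P⁻¹)ᴴ * (M * P⁻¹) = P⁻¹ * (Mᴴ * M) * P⁻¹ := by
          rw [Matrix.conjTranspose_mul, hPinvH]; noncomm_ring
      _ = P⁻¹ * (P * P) * P⁻¹ := by rw [hPP]
      _ = (P⁻¹ * P) * (P * P⁻¹) := by noncomm_ring
      _ = 1 := by rw [Matrix.nonsing_inv_mul _ hPdet, Matrix.mul_nonsing_inv _ hPdet, one_mul]
  · rw [Matrix.mul_assoc, Matrix.nonsing_inv_mul _ hPdet, Matrix.mul_one]

/-- the set of unitary matrices satisfying the reality condition is compact -/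
lemma isCompact_sp : IsCompact {W : Matrix (Fin n × Fin 2) (Fin n × Fin 2) ℂ |
    Wᴴ * W = 1 ∧ QS n W} := by
  set N := Fin n × Fin 2
  have hK : IsCompact (Set.pi Set.univ fun _ : N =>
      Set.pi Set.univ fun _ : N => Metric.closedBall (0 : ℂ) 1) :=
    isCompact_univ_pi fun _ => isCompact_univ_pi fun _ => isCompact_closedBall 0 1
  apply hK.of_isClosed_subset
  · exact (isClosed_eq ((continuous_id.matrix_conjTranspose).matrix_mul continuous_id)
      continuous_const).inter (QS.isClosed n)
  · rintro W ⟨hW, -⟩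
    rw [Set.mem_univ_pi]
    intro p
    rw [Set.mem_univ_pi]
    intro q
    rw [Metric.mem_closedBall, dist_zero_right]
    have h1 : (1 : ℂ) = ∑ r, (starRingEnd ℂ) (W r q) * W r q := by
      have := congrFun (congrFun hW q) q
      erw [Matrix.mul_apply] at this
      simp only [Matrix.one_apply_eq] at this
      rw [← this]
      rfl
    have h2 : (1 : ℝ) = ∑ r, Complex.normSq (W r q) := by
      have := congrArg Complex.re h1
      simpa [Complex.re_sum, Complex.normSq_apply, Complex.mul_re] using this
    have h3 : Complex.normSq (W p q) ≤ 1 := by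
      rw [h2]
      exact Finset.single_le_sum (f := fun r => Complex.normSq (W r q)) (fun r _ => Complex.normSq_nonneg _) (Finset.mem_univ p)
    have h4 : ‖W p q‖ ^ 2 ≤ 1 := by
      rw [Complex.sq_norm]; exact h3
    nlinarith [norm_nonneg (W p q)]

/-- polar decomposition of a matrix satisfying the reality condition -/
lemma complex_polar {M : Matrix (Fin n × Fin 2) (Fin n × Fin 2) ℂ} (hQ : QS n M) :
    ∃ W P, QS n W ∧ QS n P ∧ Wᴴ * W = 1 ∧ P.PosSemidef ∧ M = W * P := by
  obtain ⟨t, htu, ht0⟩ := exists_good_seq M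
  set Mk : ℕ → Matrix (Fin n × Fin 2) (Fin n × Fin 2) ℂ := fun k => M + (t k : ℂ) • 1 with hMk
  have hMkQ : ∀ k, QS n (Mk k) := fun k => QS.add n hQ (QS.real_smul_one n (t k))
  have hpolar := fun k => polar_invertible n (hMkQ k) (htu k)
  choose Wk Pk hQW hQP hWu hPps hMkeq using hpolar
  -- Mk tendsto M
  have hMkt : Tendsto Mk atTop (𝓝 M) := by
    have : Tendsto (fun k => ((t k : ℂ) • (1 : Matrix (Fin n × Fin 2) (Fin n × Fin 2) ℂ)))
        atTop (𝓝 0) := by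
      have h1 : Tendsto (fun k => (t k : ℂ)) atTop (𝓝 0) := by
        rw [show ((0 : ℂ)) = ((0 : ℝ) : ℂ) by norm_num]
        exact (Complex.continuous_ofReal.tendsto 0).comp ht0
      simpa using h1.smul_const (1 : Matrix (Fin n × Fin 2) (Fin n × Fin 2) ℂ)
    have := this.const_add M
    simpa [hMk] using this
  haveI : FirstCountableTopology (Matrix (Fin n × Fin 2) (Fin n × Fin 2) ℂ) :=
    inferInstanceAs (FirstCountableTopology ((Fin n × Fin 2) → (Fin n × Fin 2) → ℂ))
  haveI : T2Space (Matrix (Fin n × Fin 2) (Fin n × Fin 2) ℂ) :=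
    inferInstanceAs (T2Space ((Fin n × Fin 2) → (Fin n × Fin 2) → ℂ))
  -- extract convergent subsequence of unitaries
  obtain ⟨W, hWmem, g, hg, hWt⟩ := (isCompact_sp n).tendsto_subseq
    (x := Wk) (fun k => ⟨hWu k, hQW k⟩)
  obtain ⟨hWunit, hWQ⟩ := hWmem
  refine ⟨W, Wᴴ * M, hWQ, QS.mul n (QS.conjTranspose n hWQ) hQ, hWunit, ?_, ?_⟩
  · -- Wᴴ M is PSD as limit of the Pk
    have hPk_eq : ∀ k, Pk k = (Wk k)ᴴ * Mk k := by
      intro k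
      rw [hMkeq k, ← Matrix.mul_assoc, hWu k, Matrix.one_mul]
    have hPt : Tendsto (fun j => Pk (g j)) atTop (𝓝 (Wᴴ * M)) := by
      have h1 : Tendsto (fun j => ((Wk (g j)), Mk (g j))) atTop (𝓝 (W, M)) :=
        hWt.prodMk_nhds (hMkt.comp hg.tendsto_atTop)
      have h2 : Continuous fun p : (Matrix (Fin n × Fin 2) (Fin n × Fin 2) ℂ) ×
          (Matrix (Fin n × Fin 2) (Fin n × Fin 2) ℂ) => p.1ᴴ * p.2 :=
        (continuous_fst.matrix_conjTranspose).matrix_mul continuous_snd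
      have := (h2.tendsto (W, M)).comp h1
      simp only [Function.comp_def] at this ⊢
      convert this using 2
      exact (hPk_eq _).trans rfl
    rw [posSemidef_iff_dotProduct_mulVec]
    constructor
    · -- Hermitian
      have h1 : Tendsto (fun j => (Pk (g j))ᴴ) atTop (𝓝 ((Wᴴ * M)ᴴ)) :=
        ((continuous_id.matrix_conjTranspose).tendsto _).comp hPt
      have h2 : (fun j => (Pk (g j))ᴴ) = fun j => Pk (g j) := by
        funext j; exact (hPps (g j)).1
      rw [h2] at h1
      exact tendsto_nhds_unique h1 hPt
    · -- positivity
      intro x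
      have hv : Tendsto (fun j => star x ⬝ᵥ ((Pk (g j)) *ᵥ x)) atTop
          (𝓝 (star x ⬝ᵥ ((Wᴴ * M) *ᵥ x))) := by
        have hc : Continuous fun P : Matrix (Fin n × Fin 2) (Fin n × Fin 2) ℂ =>
            star x ⬝ᵥ (P *ᵥ x) :=
          continuous_const.dotProduct (continuous_id.matrix_mulVec continuous_const)
        exact (hc.tendsto _).comp hPt
      have hnn : ∀ j, 0 ≤ star x ⬝ᵥ ((Pk (g j)) *ᵥ x) := fun j => (hPps (g j)).dotProduct_mulVec_nonneg x
      rw [Complex.le_def] at *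
      constructor
      · have hre : Tendsto (fun j => (star x ⬝ᵥ ((Pk (g j)) *ᵥ x)).re) atTop
            (𝓝 ((star x ⬝ᵥ ((Wᴴ * M) *ᵥ x)).re)) :=
          (Complex.continuous_re.tendsto _).comp hv
        exact le_of_tendsto_of_tendsto' tendsto_const_nhds hre fun j => (hnn j).1
      · have him : Tendsto (fun j => (star x ⬝ᵥ ((Pk (g j)) *ᵥ x)).im) atTop
            (𝓝 ((star x ⬝ᵥ ((Wᴴ * M) *ᵥ x)).im)) :=
          (Complex.continuous_im.tendsto _).comp hv
        have him' : (fun j => (star x ⬝ᵥ ((Pk (g j)) *ᵥ x)).im) = fun _ => (0 : ℝ) := by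
          funext j; exact ((hnn j).2).symm
        rw [him'] at him
        exact (tendsto_nhds_unique tendsto_const_nhds him)
  · -- M = W * (Wᴴ * M)
    rw [← Matrix.mul_assoc]
    have : W * Wᴴ = 1 := by
      rw [mul_eq_one_comm] at hWunit
      exact hWunit
    rw [this, Matrix.one_mul]

end QPolar

open QPolar in
/-- Polar decomposition of a quaternionic square matrix: `A = W * P = S * W` with
`W ∈ Sp(n)` and `P`, `S` Hermitian and positive semidefinite (of the form `B* B`). -/
theorem quaternion_polar_decomposition (n : ℕ) (A : Matrix (Fin n) (Fin n) ℍ[ℝ]) :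
    ∃ (P S W : Matrix (Fin n) (Fin n) ℍ[ℝ]),
      Pᴴ = P ∧ (∃ B : Matrix (Fin n) (Fin n) ℍ[ℝ], P = Bᴴ * B) ∧
      Sᴴ = S ∧ (∃ C : Matrix (Fin n) (Fin n) ℍ[ℝ], S = Cᴴ * C) ∧
      Wᴴ * W = 1 ∧
      A = W * P ∧ A = S * W := by
  obtain ⟨W, P, hQW, hQP, hWu, hPps, hMeq⟩ := complex_polar n (QS_emb n A)
  have hQB : QS n hPps.sqrt := QS.sqrt n hQP hPps
  have hBH : (hPps.sqrt)ᴴ = hPps.sqrt := hPps.posSemidef_sqrt.1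
  have hBB : hPps.sqrt * hPps.sqrt = P := hPps.sqrt_mul_self
  obtain ⟨W', hW'⟩ := QS.exists_emb n hQW
  obtain ⟨P', hP'⟩ := QS.exists_emb n hQP
  obtain ⟨B', hB'⟩ := QS.exists_emb n hQB
  have hinj := emb_injective n
  have hPB : P' = B'ᴴ * B' := by
    apply hinj
    rw [_root_.map_mul, emb_conjTranspose, hB', hP', hBH, hBB]
  have hWu' : W'ᴴ * W' = 1 := by
    apply hinj
    rw [_root_.map_mul, emb_conjTranspose, hW', _root_.map_one, hWu]
  have hAWP : A = W' * P' := by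
    apply hinj
    rw [_root_.map_mul, hW', hP', hMeq]
  refine ⟨P', W' * P' * W'ᴴ, W', ?_, ⟨B', hPB⟩, ?_, ⟨B' * W'ᴴ, ?_⟩, hWu', hAWP, ?_⟩
  · rw [hPB, Matrix.conjTranspose_mul, Matrix.conjTranspose_conjTranspose]
  · rw [Matrix.conjTranspose_mul, Matrix.conjTranspose_mul,
      Matrix.conjTranspose_conjTranspose]
    rw [hPB]
    simp only [Matrix.conjTranspose_mul, Matrix.conjTranspose_conjTranspose, Matrix.mul_assoc]
  · rw [Matrix.conjTranspose_mul, Matrix.conjTranspose_conjTranspose, hPB]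
    simp only [Matrix.mul_assoc]
  · rw [hAWP, Matrix.mul_assoc, Matrix.mul_assoc, hWu', Matrix.mul_one]

end
end

section
/- For every k, there exists an injective monoid homomorphism f from the quaternionic unitary group Sp(k) = {A : k×k matrix over ℍ | A*A = I} to the multiplicative monoid of complex 2k×2k matrices (indexed by Fin k ⊕ Fin k) whose range is exactly the set of complex matrices B satisfying both Bᴴ * B = I and Bᵀ * Ω * B = Ω, where Ω is the block matrix [[0, -I],[I, 0]]. In particular, Sp(k) is isomorphic as a group to the intersection of the complex unitary group U(2k) with the complex symplectic group {B | BᵀΩB = Ω}. -/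
open Matrix Quaternion

/-- The compact symplectic group `Sp(k)`: quaternionic `k × k` matrices with `A* A = 1`,
as a submonoid of the multiplicative monoid of matrices. -/
noncomputable def Sp (k : ℕ) : Submonoid (Matrix (Fin k) (Fin k) ℍ[ℝ]) where
  carrier := {A | Aᴴ * A = 1}
  one_mem' := by simp
  mul_mem' := by
    intro a b ha hb
    show (a * b)ᴴ * (a * b) = 1
    rw [Matrix.conjTranspose_mul, Matrix.mul_assoc, ← Matrix.mul_assoc aᴴ a b, ha,
      Matrix.one_mul, hb]

/-- The standard symplectic form `Ω = [[0, -I], [I, 0]]` on `ℂ^(2k)`. -/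
def Omega (k : ℕ) : Matrix (Fin k ⊕ Fin k) (Fin k ⊕ Fin k) ℂ :=
  Matrix.fromBlocks 0 (-1) 1 0

def Qz : ℍ[ℝ] →+ ℂ where
  toFun q := ⟨q.re, q.imI⟩
  map_zero' := by apply Complex.ext <;> simp
  map_add' a b := by apply Complex.ext <;> simp

def Qw : ℍ[ℝ] →+ ℂ where
  toFun q := ⟨q.imJ, q.imK⟩
  map_zero' := by apply Complex.ext <;> simp
  map_add' a b := by apply Complex.ext <;> simp

lemma Qz_mul (a b : ℍ[ℝ]) : Qz (a * b) = Qz a * Qz b - Qw a * star (Qw b) := by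
  apply Complex.ext <;>
    simp [Qz, Qw, Complex.ext_iff, Quaternion.re_mul, Quaternion.imI_mul,
      Quaternion.imJ_mul, Quaternion.imK_mul] <;> ring

lemma Qw_mul (a b : ℍ[ℝ]) : Qw (a * b) = Qz a * Qw b + Qw a * star (Qz b) := by
  apply Complex.ext <;>
    simp [Qz, Qw, Complex.ext_iff, Quaternion.re_mul, Quaternion.imI_mul,
      Quaternion.imJ_mul, Quaternion.imK_mul] <;> ring

lemma Qz_star (a : ℍ[ℝ]) : Qz (star a) = star (Qz a) := by
  apply Complex.ext <;> simp [Qz, Complex.ext_iff]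

lemma Qw_star (a : ℍ[ℝ]) : Qw (star a) = - Qw a := by
  apply Complex.ext <;> simp [Qw, Complex.ext_iff]

lemma Qz_one : Qz 1 = 1 := by apply Complex.ext <;> simp [Qz]
lemma Qw_one : Qw 1 = 0 := by apply Complex.ext <;> simp [Qw]

variable {k : ℕ}

/-- The complexification map on matrices. -/
def df (A : Matrix (Fin k) (Fin k) ℍ[ℝ]) : Matrix (Fin k ⊕ Fin k) (Fin k ⊕ Fin k) ℂ :=
  Matrix.fromBlocks (A.map Qz) (-(A.map Qw))
    (A.map (fun q => star (Qw q))) (A.map (fun q => star (Qz q)))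

lemma df_one : df (1 : Matrix (Fin k) (Fin k) ℍ[ℝ]) = 1 := by
  unfold df
  have h1 : (1 : Matrix (Fin k) (Fin k) ℍ[ℝ]).map Qz = 1 := by
    ext i j; by_cases h : i = j <;> simp [Matrix.one_apply, h, Qz_one]
  have h2 : (1 : Matrix (Fin k) (Fin k) ℍ[ℝ]).map Qw = 0 := by
    ext i j; by_cases h : i = j <;> simp [Matrix.one_apply, h, Qw_one]
  have h3 : (1 : Matrix (Fin k) (Fin k) ℍ[ℝ]).map (fun q => star (Qw q)) = 0 := by
    ext i j; by_cases h : i = j <;> simp [Matrix.one_apply, h, Qw_one]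
  have h4 : (1 : Matrix (Fin k) (Fin k) ℍ[ℝ]).map (fun q => star (Qz q)) = 1 := by
    ext i j; by_cases h : i = j <;> simp [Matrix.one_apply, h, Qz_one]
  rw [h1, h2, h3, h4]
  simp [Matrix.fromBlocks_one]

lemma map_star_comm (A : Matrix (Fin k) (Fin k) ℍ[ℝ]) (f : ℍ[ℝ] → ℂ) :
    (A.map f).map star = A.map (fun q => star (f q)) := by
  ext i j; simp

lemma df_mul (A B : Matrix (Fin k) (Fin k) ℍ[ℝ]) : df (A * B) = df A * df B := by
  unfold df
  rw [Matrix.fromBlocks_multiply]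
  have h1 : (A * B).map ⇑Qz =
      A.map ⇑Qz * B.map ⇑Qz + (-(A.map ⇑Qw)) * B.map (fun q => star (Qw q)) := by
    ext i j
    simp only [Matrix.map_apply, Matrix.mul_apply, Matrix.add_apply, Matrix.neg_apply,
      map_sum]
    rw [← Finset.sum_add_distrib]
    refine Finset.sum_congr rfl fun l _ => ?_
    rw [Qz_mul]; ring
  have h2 : -((A * B).map ⇑Qw) =
      A.map ⇑Qz * (-(B.map ⇑Qw)) + (-(A.map ⇑Qw)) * B.map (fun q => star (Qz q)) := by
    ext i j
    simp only [Matrix.map_apply, Matrix.mul_apply, Matrix.add_apply, Matrix.neg_apply,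
      map_sum]
    rw [← Finset.sum_add_distrib, ← Finset.sum_neg_distrib]
    refine Finset.sum_congr rfl fun l _ => ?_
    rw [Qw_mul]; ring
  have h3 : (A * B).map (fun q => star (Qw q)) =
      A.map (fun q => star (Qw q)) * B.map ⇑Qz +
        A.map (fun q => star (Qz q)) * B.map (fun q => star (Qw q)) := by
    ext i j
    simp only [Matrix.map_apply, Matrix.mul_apply, Matrix.add_apply, Matrix.neg_apply,
      map_sum, star_sum]
    rw [← Finset.sum_add_distrib]
    refine Finset.sum_congr rfl fun l _ => ?_
    rw [Qw_mul, star_add, star_mul', star_mul', star_star]; ring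
  have h4 : (A * B).map (fun q => star (Qz q)) =
      A.map (fun q => star (Qw q)) * (-(B.map ⇑Qw)) +
        A.map (fun q => star (Qz q)) * B.map (fun q => star (Qz q)) := by
    ext i j
    simp only [Matrix.map_apply, Matrix.mul_apply, Matrix.add_apply, Matrix.neg_apply,
      map_sum, star_sum]
    rw [← Finset.sum_add_distrib]
    refine Finset.sum_congr rfl fun l _ => ?_
    rw [Qz_mul, star_sub, star_mul', star_mul', star_star]; ring
  rw [h1, h2, h3, h4]

lemma df_conjTranspose (A : Matrix (Fin k) (Fin k) ℍ[ℝ]) : df Aᴴ = (df A)ᴴ := by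
  unfold df
  rw [Matrix.fromBlocks_conjTranspose]
  have h1 : Aᴴ.map ⇑Qz = (A.map ⇑Qz)ᴴ := by
    ext i j
    simp [Matrix.conjTranspose_apply, Qz_star]
  have h2 : -(Aᴴ.map ⇑Qw) = (A.map fun q => star (Qw q))ᴴ := by
    ext i j
    simp [Matrix.conjTranspose_apply, Qw_star]
  have h3 : Aᴴ.map (fun q => star (Qw q)) = (-(A.map ⇑Qw))ᴴ := by
    ext i j
    simp [Matrix.conjTranspose_apply, Qw_star]
  have h4 : Aᴴ.map (fun q => star (Qz q)) = (A.map fun q => star (Qz q))ᴴ := by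
    ext i j
    simp [Matrix.conjTranspose_apply, Qz_star]
  rw [h1, h2, h3, h4]

lemma df_omega (A : Matrix (Fin k) (Fin k) ℍ[ℝ]) :
    Omega k * df A = (df A).map star * Omega k := by
  unfold df Omega
  rw [Matrix.fromBlocks_multiply]
  have : (Matrix.fromBlocks (A.map ⇑Qz) (-(A.map ⇑Qw))
      (A.map fun q => star (Qw q)) (A.map fun q => star (Qz q))).map (star : ℂ → ℂ) =
      Matrix.fromBlocks (A.map fun q => star (Qz q)) (-(A.map fun q => star (Qw q)))
        (A.map ⇑Qw) (A.map ⇑Qz) := by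
    ext (i|i) (j|j) <;> simp [Matrix.map_apply]
  rw [this, Matrix.fromBlocks_multiply]
  simp

lemma conjT_eq {m n : Type*} (M : Matrix m n ℂ) : Mᴴ = (M.map star)ᵀ := by
  ext i j; simp [Matrix.conjTranspose_apply]

lemma df_injective : Function.Injective (df (k := k)) := by
  intro A B h
  unfold df at h
  have hz : A.map ⇑Qz = B.map ⇑Qz := by
    have := congrArg Matrix.toBlocks₁₁ h
    simpa using this
  have hw : A.map ⇑Qw = B.map ⇑Qw := by
    have := congrArg Matrix.toBlocks₁₂ h
    simpa using this
  ext i j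
  · have h1 := congrFun (congrFun hz i) j
    have h2 := congrFun (congrFun hw i) j
    simp only [Matrix.map_apply] at h1 h2
    have e1 : (Qz (A i j)).re = (Qz (B i j)).re := by rw [h1]
    exact e1
  · have h1 := congrFun (congrFun hz i) j
    simp only [Matrix.map_apply] at h1
    have : (Qz (A i j)).im = (Qz (B i j)).im := by rw [h1]
    exact this
  · have h2 := congrFun (congrFun hw i) j
    simp only [Matrix.map_apply] at h2
    have : (Qw (A i j)).re = (Qw (B i j)).re := by rw [h2]
    exact this
  · have h2 := congrFun (congrFun hw i) j
    simp only [Matrix.map_apply] at h2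
    have : (Qw (A i j)).im = (Qw (B i j)).im := by rw [h2]
    exact this


/-- The compact symplectic group `Sp(k)` of quaternionic unitary matrices is isomorphic
(via an injective monoid homomorphism) to the group of complex `2k × 2k` matrices `B`
with `Bᴴ * B = 1` and `Bᵀ * Ω * B = Ω`, i.e. to `U(2k) ∩ Sp(2k, ℂ)`. -/
theorem sp_realization_complex (k : ℕ) :
    ∃ f : Sp k →* Matrix (Fin k ⊕ Fin k) (Fin k ⊕ Fin k) ℂ,
      Function.Injective f ∧
      Set.range f =
        {B : Matrix (Fin k ⊕ Fin k) (Fin k ⊕ Fin k) ℂ |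
          Bᴴ * B = 1 ∧ Bᵀ * Omega k * B = Omega k} := by
  refine ⟨{ toFun := fun A => df A.1,
            map_one' := df_one,
            map_mul' := fun A B => df_mul A.1 B.1 }, ?_, ?_⟩
  · intro A B h
    exact Subtype.ext (df_injective h)
  · ext B
    simp only [Set.mem_range, Set.mem_setOf_eq, MonoidHom.coe_mk, OneHom.coe_mk]
    constructor
    · rintro ⟨⟨A, hA⟩, rfl⟩
      have hA' : Aᴴ * A = 1 := hA
      have hu : (df A)ᴴ * df A = 1 := by
        rw [← df_conjTranspose, ← df_mul, hA', df_one]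
      refine ⟨hu, ?_⟩
      -- Bᵀ * conj B = 1
      have hcb : (df A)ᵀ * (df A).map star = 1 := by
        have h0 : ((df A).map star)ᵀ * df A = 1 := by rw [← conjT_eq]; exact hu
        calc (df A)ᵀ * (df A).map star
            = (((df A).map star)ᵀ * df A)ᵀ := by
              rw [Matrix.transpose_mul, Matrix.transpose_transpose]
          _ = 1 := by rw [h0, Matrix.transpose_one]
      calc (df A)ᵀ * Omega k * df A
          = (df A)ᵀ * (Omega k * df A) := by rw [Matrix.mul_assoc]
        _ = (df A)ᵀ * ((df A).map star * Omega k) := by rw [df_omega]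
        _ = ((df A)ᵀ * (df A).map star) * Omega k := by rw [Matrix.mul_assoc]
        _ = Omega k := by rw [hcb, Matrix.one_mul]
    · rintro ⟨hu, hs⟩
      -- derive Omega k * B = B.map star * Omega k
      have hBB : B * Bᴴ = 1 := mul_eq_one_comm.mp hu
      have hcb : B.map star * Bᵀ = 1 := by
        calc B.map star * Bᵀ = (B * Bᴴ)ᵀ := by
              rw [Matrix.transpose_mul, conjT_eq, Matrix.transpose_transpose]
          _ = 1 := by rw [hBB, Matrix.transpose_one]
      have hrel : Omega k * B = B.map star * Omega k := by
        have hs' : Bᵀ * (Omega k * B) = Omega k := by rw [← Matrix.mul_assoc]; exact hs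
        calc Omega k * B = (B.map star * Bᵀ) * Omega k * B := by rw [hcb, Matrix.one_mul]
          _ = B.map star * (Bᵀ * (Omega k * B)) := by
              rw [Matrix.mul_assoc, Matrix.mul_assoc]
          _ = B.map star * Omega k := by rw [hs']
      -- block relations
      set P := B.toBlocks₁₁ with hP
      set Q := B.toBlocks₁₂ with hQ
      set R := B.toBlocks₂₁ with hR
      set S := B.toBlocks₂₂ with hS
      have hB : B = Matrix.fromBlocks P Q R S := (Matrix.fromBlocks_toBlocks B).symm
      have hrel' : Matrix.fromBlocks (-R) (-S) P Q =
          Matrix.fromBlocks (Q.map star) (-(P.map star)) (S.map star) (-(R.map star)) := by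
        have e1 : Omega k * B = Matrix.fromBlocks (-R) (-S) P Q := by
          rw [hB, Omega, Matrix.fromBlocks_multiply]
          simp
        have e2 : B.map star * Omega k =
            Matrix.fromBlocks (Q.map star) (-(P.map star)) (S.map star) (-(R.map star)) := by
          rw [hB, Omega]
          have : (Matrix.fromBlocks P Q R S).map (star : ℂ → ℂ) =
              Matrix.fromBlocks (P.map star) (Q.map star) (R.map star) (S.map star) := by
            ext (i|i) (j|j) <;> simp [Matrix.map_apply]
          rw [this, Matrix.fromBlocks_multiply]
          simp
        rw [← e1, ← e2, hrel]
      have hRQ : R = -(Q.map star) := by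
        have := congrArg Matrix.toBlocks₁₁ hrel'
        simp only [Matrix.toBlocks_fromBlocks₁₁] at this
        exact neg_eq_iff_eq_neg.mp this
      have hSP : S = P.map star := by
        have := congrArg Matrix.toBlocks₁₂ hrel'
        simp only [Matrix.toBlocks_fromBlocks₁₂] at this
        exact neg_inj.mp this
      -- reconstruct A
      set A : Matrix (Fin k) (Fin k) ℍ[ℝ] := fun i j =>
        ⟨(P i j).re, (P i j).im, (-(Q i j)).re, (-(Q i j)).im⟩ with hAdef
      have hfA : df A = B := by
        have hz : A.map ⇑Qz = P := by
          ext i j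
          apply Complex.ext <;> simp [hAdef, Qz, Matrix.map_apply, Matrix.map]
        have hw : A.map ⇑Qw = -Q := by
          ext i j
          apply Complex.ext <;> simp [hAdef, Qw, Matrix.map_apply, Matrix.map]
        have hsw : A.map (fun q => star (Qw q)) = R := by
          ext i j
          have : A.map (fun q => star (Qw q)) = (A.map ⇑Qw).map star := by
            ext a b; simp
          rw [this, hw, hRQ]
          simp
        have hsz : A.map (fun q => star (Qz q)) = S := by
          have : A.map (fun q => star (Qz q)) = (A.map ⇑Qz).map star := by
            ext a b; simp
          rw [this, hz, hSP]
        unfold df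
        rw [hz, hw, hsw, hsz, neg_neg, ← hB]
      have hASp : A ∈ Sp k := by
        have : df (Aᴴ * A) = df 1 := by
          rw [df_mul, df_conjTranspose, hfA, df_one, hu]
        exact df_injective this
      exact ⟨⟨A, hASp⟩, hfA⟩
end
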